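/- arXiv:1701.07216 — 2 statements merged into one kernel-verified Lean document; each statement's English description precedes it below -/
import Mathlib

section
/- For every n ≥ 1, the sum over all type B linked partitions τ of {1,...,n} of x^{os(τ)-1} equals 2^n (x+1)_{n-1}, where os(τ) is the number of origins plus singletons in the linear representation of τ. -/
open Finset Polynomial
open scoped Classical

/-! ### Tree-like tableaux (grid model)
A cell is a pair (row index, column index), both 0-based.  A Ferrers diagram
is a finite lower set of cells.  A tree-like tableau of size `n` is a pair
`(F, P)` where `P` is the set of pointed cells of the diagram `F`. -/

def IsFerrersGrid (F : Finset (ℕ × ℕ)) : Prop :=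
  ∀ p ∈ F, ∀ i j : ℕ, i ≤ p.1 → j ≤ p.2 → (i, j) ∈ F

def IsTLT (F P : Finset (ℕ × ℕ)) : Prop :=
  F.Nonempty ∧ IsFerrersGrid F ∧ P ⊆ F ∧ (0, 0) ∈ P ∧
  (∀ p ∈ P, p ≠ (0, 0) →
    Xor' (∃ i < p.1, (i, p.2) ∈ P) (∃ j < p.2, (p.1, j) ∈ P)) ∧
  (∀ p ∈ F, ∃ q ∈ P, q.1 = p.1) ∧
  (∀ p ∈ F, ∃ q ∈ P, q.2 = p.2)

/-- The finite set of tree-like tableaux of size `n`. -/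
noncomputable def TLT (n : ℕ) : Finset (Finset (ℕ × ℕ) × Finset (ℕ × ℕ)) :=
  ((Finset.range n ×ˢ Finset.range n).powerset ×ˢ
    (Finset.range n ×ˢ Finset.range n).powerset).filter
    (fun T => IsTLT T.1 T.2 ∧ T.2.card = n)

/-- number of non-root points in the topmost row -/
noncomputable def topT (P : Finset (ℕ × ℕ)) : ℕ :=
  (P.filter (fun p => p.1 = 0 ∧ p.2 ≠ 0)).card
/-- number of non-root points in the leftmost column -/
noncomputable def leftT (P : Finset (ℕ × ℕ)) : ℕ :=
  (P.filter (fun p => p.2 = 0 ∧ p.1 ≠ 0)).card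
/-- corners of a Ferrers diagram -/
noncomputable def cornersT (F : Finset (ℕ × ℕ)) : Finset (ℕ × ℕ) :=
  F.filter (fun p => (p.1 + 1, p.2) ∉ F ∧ (p.1, p.2 + 1) ∉ F)
/-- non-occupied corners -/
noncomputable def nocT (F P : Finset (ℕ × ℕ)) : ℕ :=
  ((cornersT F).filter (fun p => p ∉ P)).card
/-- occupied corners -/
noncomputable def ocT (F P : Finset (ℕ × ℕ)) : ℕ :=
  ((cornersT F).filter (fun p => p ∈ P)).card
/-- symmetric (invariant under reflection across the main diagonal) -/
def IsSymTLT (F P : Finset (ℕ × ℕ)) : Prop :=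
  F.image Prod.swap = F ∧ P.image Prod.swap = P

/-! ### Alternative tableaux (border-label model)
A Ferrers diagram of size `n` (empty rows and columns allowed) is encoded by
the set `C ⊆ {1,…,n}` of its column labels (labels of the south-east border
steps, read from north-east to south-west); the remaining labels are row
labels.  Row `r` and column `c` intersect in a cell (written `(r, c)`)
exactly when `r < c`.  Inside a row, cells further to the left have *larger*
column labels; inside a column, cells further up have *smaller* row labels.
An alternative tableau is `(C, L, U)` where `L` (resp. `U`) is the set of
cells containing a left (resp. up) arrow. -/

def IsAT (n : ℕ) (C : Finset ℕ) (L U : Finset (ℕ × ℕ)) : Prop :=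
  C ⊆ Finset.Icc 1 n ∧ Disjoint L U ∧
  (∀ p ∈ L ∪ U, p.1 ∈ Finset.Icc 1 n ∧ p.1 ∉ C ∧ p.2 ∈ C ∧ p.1 < p.2) ∧
  (∀ p ∈ L, ∀ c' : ℕ, p.2 < c' → (p.1, c') ∉ L ∪ U) ∧
  (∀ p ∈ U, ∀ r' : ℕ, r' < p.1 → (r', p.2) ∉ L ∪ U)

/-- the finite set of alternative tableaux of size `n` -/
noncomputable def ATset (n : ℕ) :
    Finset (Finset ℕ × Finset (ℕ × ℕ) × Finset (ℕ × ℕ)) :=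
  ((Finset.Icc 1 n).powerset ×ˢ
    ((Finset.Icc 1 n ×ˢ Finset.Icc 1 n).powerset ×ˢ
      (Finset.Icc 1 n ×ˢ Finset.Icc 1 n).powerset)).filter
    (fun T => IsAT n T.1 T.2.1 T.2.2)

/-- alternative tableaux of size `n` in which every column contains an up arrow -/
noncomputable def ATstar (n : ℕ) :
    Finset (Finset ℕ × Finset (ℕ × ℕ) × Finset (ℕ × ℕ)) :=
  (ATset n).filter (fun T => ∀ c ∈ T.1, ∃ p ∈ T.2.2, p.2 = c)

/-- label of the topmost row -/
noncomputable def topRowA (n : ℕ) (C : Finset ℕ) : ℕ :=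
  WithTop.untopD 0 ((Finset.Icc 1 n \ C).min)
/-- number of arrows in the topmost row -/
noncomputable def topA (n : ℕ) (C : Finset ℕ) (L U : Finset (ℕ × ℕ)) : ℕ :=
  ((L ∪ U).filter (fun p => p.1 = topRowA n C)).card
/-- number of unrestricted rows (rows with no left arrow) -/
noncomputable def urrA (n : ℕ) (C : Finset ℕ) (L : Finset (ℕ × ℕ)) : ℕ :=
  ((Finset.Icc 1 n \ C).filter (fun r => ∀ p ∈ L, p.1 ≠ r)).card
/-- number of non-occupied corners (the corners are exactly the cells `(c-1, c)`
with `c` a column label and `c-1` a row label) -/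
noncomputable def nocA (n : ℕ) (C : Finset ℕ) (L U : Finset (ℕ × ℕ)) : ℕ :=
  (C.filter (fun c => c - 1 ∈ Finset.Icc 1 n \ C ∧ (c - 1, c) ∉ L ∪ U)).card
/-- symmetric alternative tableau of size `2n` (reflection across the main
diagonal exchanges border label `k` with `2n+1-k`, rows with columns and
left arrows with up arrows) -/
def IsSymAT (n : ℕ) (C : Finset ℕ) (L U : Finset (ℕ × ℕ)) : Prop :=
  (∀ k ∈ Finset.Icc 1 (2 * n), (k ∈ C ↔ (2 * n + 1 - k) ∉ C)) ∧
  (∀ r c : ℕ, (r, c) ∈ L ↔ (2 * n + 1 - c, 2 * n + 1 - r) ∈ U)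

/-! ### Linked partitions (linear representation / arc model)
A linked partition of `{1,…,n}` is identified with its set of arcs `(i, j)`,
`i < j`: each vertex is the right-hand endpoint of at most one arc. -/

def IsLP (n : ℕ) (A : Finset (ℕ × ℕ)) : Prop :=
  (∀ p ∈ A, 1 ≤ p.1 ∧ p.1 < p.2 ∧ p.2 ≤ n) ∧
  (∀ p ∈ A, ∀ q ∈ A, p.2 = q.2 → p.1 = q.1)

noncomputable def LP (n : ℕ) : Finset (Finset (ℕ × ℕ)) :=
  ((Finset.Icc 1 n ×ˢ Finset.Icc 1 n).powerset).filter (IsLP n)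

/-- number of origins plus singletons (= vertices with no incoming arc) -/
noncomputable def osL (n : ℕ) (A : Finset (ℕ × ℕ)) : ℕ :=
  ((Finset.Icc 1 n).filter (fun j => ∀ p ∈ A, p.2 ≠ j)).card
/-- number of arcs with left-hand endpoint `1` -/
noncomputable def oneL (A : Finset (ℕ × ℕ)) : ℕ :=
  (A.filter (fun p => p.1 = 1)).card
/-- a destination: only a right-hand endpoint -/
def IsDest (A : Finset (ℕ × ℕ)) (j : ℕ) : Prop :=
  (∃ p ∈ A, p.2 = j) ∧ ∀ p ∈ A, p.1 ≠ j

/-- consecutive pairs of a finite set of naturals -/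
noncomputable def consecPairs (S : Finset ℕ) : Finset (ℕ × ℕ) :=
  (S ×ˢ S).filter (fun p => p.1 < p.2 ∧ ∀ k ∈ S, ¬(p.1 < k ∧ k < p.2))

/-- the set of row labels of cells of column `c` containing an arrow -/
noncomputable def colRows (L U : Finset (ℕ × ℕ)) (c : ℕ) : Finset ℕ :=
  ((L ∪ U).filter (fun p => p.2 = c)).image Prod.fst

/-- the map `Φ`: for each column `j`, with the up arrow in row `i₁` and the
left arrows in rows `i₂ < … < i_t`, draw the arcs `(i₁,i₂), …, (i_{t-1},i_t), (i_t, j)`,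
i.e. the consecutive pairs of `{i₁,…,i_t, j}`. -/
noncomputable def Phi (T : Finset ℕ × Finset (ℕ × ℕ) × Finset (ℕ × ℕ)) :
    Finset (ℕ × ℕ) :=
  T.1.biUnion (fun c => consecPairs (insert c (colRows T.2.1 T.2.2 c)))

/-! ### Type B alternative tableaux
Encoded by `(C, L, U)` with `C ⊆ Icc 1 n` the set of column labels of the
subdiagram; rows of the shifted diagram are labelled by
`(Icc 1 n \ C) ∪ (-C)`, rows higher up having smaller labels.  Row `x` and
column `c` intersect in a cell exactly when (`x > 0` and `x < c`) or
(`x < 0` and `-x ≤ c`); the cell `(-c, c)` is the diagonal cell of row `-c`. -/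

def cellB (n : ℕ) (C : Finset ℤ) (x c : ℤ) : Prop :=
  c ∈ C ∧ ((1 ≤ x ∧ x ≤ (n : ℤ) ∧ x ∉ C ∧ x < c) ∨ (x < 0 ∧ -x ∈ C ∧ -x ≤ c))

def IsATB (n : ℕ) (C : Finset ℤ) (L U : Finset (ℤ × ℤ)) : Prop :=
  C ⊆ Finset.Icc 1 (n : ℤ) ∧ Disjoint L U ∧
  (∀ p ∈ L ∪ U, p.2 ∈ C ∧
    ((1 ≤ p.1 ∧ p.1 ≤ (n : ℤ) ∧ p.1 ∉ C ∧ p.1 < p.2) ∨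
      (p.1 < 0 ∧ -p.1 ∈ C ∧ -p.1 < p.2))) ∧
  (∀ p ∈ L, ∀ c' : ℤ, p.2 < c' → (p.1, c') ∉ L ∪ U) ∧
  (∀ p ∈ U, ∀ x' : ℤ, x' < p.1 → (x', p.2) ∉ L ∪ U) ∧
  (∀ i ∈ C, (∃ p ∈ U, p.2 = i) → ∀ c' : ℤ, (-i, c') ∉ L ∪ U)

noncomputable def ATB (n : ℕ) :
    Finset (Finset ℤ × Finset (ℤ × ℤ) × Finset (ℤ × ℤ)) :=
  ((Finset.Icc (1 : ℤ) (n : ℤ)).powerset ×ˢ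
    ((Finset.Icc (-(n : ℤ)) (n : ℤ) ×ˢ Finset.Icc (1 : ℤ) (n : ℤ)).powerset ×ˢ
      (Finset.Icc (-(n : ℤ)) (n : ℤ) ×ˢ Finset.Icc (1 : ℤ) (n : ℤ)).powerset)).filter
    (fun T => IsATB n T.1 T.2.1 T.2.2)

/-- the row labels of a type B alternative tableau -/
noncomputable def rowsB (n : ℕ) (C : Finset ℤ) : Finset ℤ :=
  (Finset.Icc (1 : ℤ) (n : ℤ) \ C) ∪ C.image (fun c => -c)

/-- number of unrestricted rows: row `x` is unrestricted when it contains no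
left arrow and column `|x|` (if it exists) contains no up arrow -/
noncomputable def urrB (n : ℕ) (C : Finset ℤ) (L U : Finset (ℤ × ℤ)) : ℕ :=
  ((rowsB n C).filter (fun x => (∀ p ∈ L, p.1 ≠ x) ∧ ∀ p ∈ U, p.2 ≠ |x|)).card

/-- the corners of the shifted Ferrers diagram -/
noncomputable def cornersB (n : ℕ) (C : Finset ℤ) : Finset (ℤ × ℤ) :=
  (Finset.Icc (-(n : ℤ)) (n : ℤ) ×ˢ Finset.Icc (1 : ℤ) (n : ℤ)).filter
    (fun p => cellB n C p.1 p.2 ∧ (∀ x' : ℤ, p.1 < x' → ¬ cellB n C x' p.2) ∧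
      (∀ c' : ℤ, c' < p.2 → ¬ cellB n C p.1 c'))

/-- number of non-occupied diagonal corners -/
noncomputable def nocDiagB (n : ℕ) (C : Finset ℤ) (L U : Finset (ℤ × ℤ)) : ℕ :=
  ((cornersB n C).filter (fun p => p.1 = -p.2 ∧ p ∉ L ∪ U)).card
/-- number of non-occupied non-diagonal corners -/
noncomputable def nocOffB (n : ℕ) (C : Finset ℤ) (L U : Finset (ℤ × ℤ)) : ℕ :=
  ((cornersB n C).filter (fun p => p.1 ≠ -p.2 ∧ p ∉ L ∪ U)).card

/-! ### Type B linked partitions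
A pair `(V, A)`: for each `i ∈ {1,…,n}` exactly one of `i, -i` belongs to
the vertex set `V`; `A` is the set of arcs `(x, y)`, `x < y`, with each
vertex the right-hand endpoint of at most one arc. -/

def IsLPB (n : ℕ) (V : Finset ℤ) (A : Finset (ℤ × ℤ)) : Prop :=
  (∀ v ∈ V, 1 ≤ |v| ∧ |v| ≤ (n : ℤ)) ∧
  (∀ i ∈ Finset.Icc (1 : ℤ) (n : ℤ), ((i ∈ V ∧ -i ∉ V) ∨ (-i ∈ V ∧ i ∉ V))) ∧
  (∀ p ∈ A, p.1 ∈ V ∧ p.2 ∈ V ∧ p.1 < p.2) ∧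
  (∀ p ∈ A, ∀ q ∈ A, p.2 = q.2 → p.1 = q.1)

noncomputable def LPB (n : ℕ) : Finset (Finset ℤ × Finset (ℤ × ℤ)) :=
  ((Finset.Icc (-(n : ℤ)) (n : ℤ)).powerset ×ˢ
    (Finset.Icc (-(n : ℤ)) (n : ℤ) ×ˢ Finset.Icc (-(n : ℤ)) (n : ℤ)).powerset).filter
    (fun T => IsLPB n T.1 T.2)

/-- number of origins plus singletons (= vertices with no incoming arc) -/
noncomputable def osB (V : Finset ℤ) (A : Finset (ℤ × ℤ)) : ℕ :=
  (V.filter (fun v => ∀ p ∈ A, p.2 ≠ v)).card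

/-- a legal destination: `j` is only a right-hand endpoint, and its incoming
arc `(a, j)` satisfies `|a| < |j|` -/
def IsLegalDestB (A : Finset (ℤ × ℤ)) (j : ℤ) : Prop :=
  (∃ p ∈ A, p.2 = j ∧ |p.1| < |j|) ∧ ∀ p ∈ A, p.1 ≠ j

/-- consecutive pairs of a finite set of integers -/
noncomputable def consecPairsZ (S : Finset ℤ) : Finset (ℤ × ℤ) :=
  (S ×ˢ S).filter (fun p => p.1 < p.2 ∧ ∀ k ∈ S, ¬(p.1 < k ∧ k < p.2))

/-- row labels of cells of column `c` containing an arrow -/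
noncomputable def colRowsB (L U : Finset (ℤ × ℤ)) (c : ℤ) : Finset ℤ :=
  ((L ∪ U).filter (fun p => p.2 = c)).image Prod.fst

/-- column `c` contains an up arrow -/
def HasUp (U : Finset (ℤ × ℤ)) (c : ℤ) : Prop := ∃ p ∈ U, p.2 = c

/-- the map `Φ_B`: columns with an up arrow give positive vertices and chains
of arcs through their arrows (consecutive pairs of the arrow rows together
with the column label); columns without an up arrow give negative vertices
`-j` and arcs from `-j` to each row containing a left arrow of that column;
rows give positive vertices. -/
noncomputable def PhiB (n : ℕ) (T : Finset ℤ × Finset (ℤ × ℤ) × Finset (ℤ × ℤ)) :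
    Finset ℤ × Finset (ℤ × ℤ) :=
  ((Finset.Icc (1 : ℤ) (n : ℤ) \ T.1) ∪ T.1.filter (fun c => HasUp T.2.2 c) ∪
      (T.1.filter (fun c => ¬ HasUp T.2.2 c)).image (fun c => -c),
    (T.1.filter (fun c => HasUp T.2.2 c)).biUnion
        (fun c => consecPairsZ (insert c (colRowsB T.2.1 T.2.2 c))) ∪
      (T.1.filter (fun c => ¬ HasUp T.2.2 c)).biUnion
        (fun c => (colRowsB T.2.1 T.2.2 c).image (fun r => (-c, r))))

/-! ### Auxiliary machinery for the proof of Statement 14 -/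

/-- arc structures on a fixed vertex set `V` -/
noncomputable def arcsOn (V : Finset ℤ) : Finset (Finset (ℤ × ℤ)) :=
  ((V ×ˢ V).powerset).filter (fun A => (∀ p ∈ A, p.1 < p.2) ∧
    ∀ p ∈ A, ∀ q ∈ A, p.2 = q.2 → p.1 = q.1)

lemma mem_arcsOn {V : Finset ℤ} {A : Finset (ℤ × ℤ)} :
    A ∈ arcsOn V ↔ A ⊆ V ×ˢ V ∧ (∀ p ∈ A, p.1 < p.2) ∧
      ∀ p ∈ A, ∀ q ∈ A, p.2 = q.2 → p.1 = q.1 := by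
  simp [arcsOn, and_assoc]

lemma osB_pos {V : Finset ℤ} {A : Finset (ℤ × ℤ)} (hV : V.Nonempty)
    (hA : A ∈ arcsOn V) : 1 ≤ osB V A := by
  rw [mem_arcsOn] at hA
  have hmin : V.min' hV ∈ V.filter (fun v => ∀ p ∈ A, p.2 ≠ v) := by
    refine Finset.mem_filter.2 ⟨V.min'_mem hV, fun p hp hpv => ?_⟩
    have h1 : p.1 ∈ V := (Finset.mem_product.1 (hA.1 hp)).1
    have h2 := hA.2.1 p hp
    have h3 := V.min'_le p.1 h1
    omega
  exact Finset.card_pos.2 ⟨_, hmin⟩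

/-- Main inner computation: the generating function of arc structures on any
fixed `n`-element vertex set. -/
lemma arcs_sum (n : ℕ) : ∀ (V : Finset ℤ), V.card = n → V.Nonempty → ∀ x : ℤ,
    ∑ A ∈ arcsOn V, x ^ (osB V A - 1) =
      ∏ k ∈ Finset.range (n - 1), (x + 1 + (k : ℤ)) := by
  induction n with
  | zero =>
    intro V hV hne
    rw [Finset.card_eq_zero.1 hV] at hne
    exact absurd hne (by simp)
  | succ k ih =>
    intro V hcard hne x
    rcases Nat.eq_zero_or_pos k with hk | hk
    · -- singleton case
      subst hk
      obtain ⟨v, rfl⟩ := Finset.card_eq_one.1 hcard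
      have harcs : arcsOn {v} = {∅} := by
        ext A
        simp only [mem_arcsOn, Finset.mem_singleton]
        constructor
        · rintro ⟨hsub, hlt, -⟩
          rw [Finset.eq_empty_iff_forall_notMem]
          intro p hp
          have h1 := hsub hp
          simp only [Finset.mem_product, Finset.mem_singleton] at h1
          have h2 := hlt p hp
          omega
        · rintro rfl
          refine ⟨by simp, by simp, by simp⟩
      rw [harcs]
      simp [osB]
    · -- inductive step: remove the maximum vertex
      set m := V.max' hne with hm
      have hmV : m ∈ V := V.max'_mem hne
      set V' := V.erase m with hV'
      have hmV' : m ∉ V' := Finset.notMem_erase _ _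
      have hV'card : V'.card = k := by
        rw [hV', Finset.card_erase_of_mem hmV, hcard]
        omega
      have hV'ne : V'.Nonempty := Finset.card_pos.1 (by omega)
      have hlt : ∀ w ∈ V', w < m := fun w hw =>
        lt_of_le_of_ne (V.le_max' w (Finset.mem_of_mem_erase hw))
          (Finset.ne_of_mem_erase hw)
      have hVins : insert m V' = V := Finset.insert_erase hmV
      have hsubV : V' ⊆ V := Finset.erase_subset _ _
      -- the backward map
      set bwd : Finset (ℤ × ℤ) × ℤ → Finset (ℤ × ℤ) :=
        fun s => if s.2 = m then s.1 else insert (s.2, m) s.1 with hbwd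
      -- the forward map
      set fwd : Finset (ℤ × ℤ) → Finset (ℤ × ℤ) × ℤ :=
        fun A => (A.filter (fun p => p.2 ≠ m),
          (WithBot.unbotD m ((A.filter (fun p => p.2 = m)).image Prod.fst).max)) with hfwd
      -- structure of an arc set on V relative to m
      have key : ∀ A ∈ arcsOn V,
          (A.filter (fun p => p.2 = m) = ∅ ∧ fwd A = (A, m)) ∨
          (∃ w ∈ V', A.filter (fun p => p.2 = m) = {(w, m)} ∧
            (fwd A).2 = w) := by
        intro A hA
        rw [mem_arcsOn] at hA
        rcases Finset.eq_empty_or_nonempty (A.filter (fun p => p.2 = m)) with he | hne'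
        · left
          refine ⟨he, ?_⟩
          have h1 : A.filter (fun p => p.2 ≠ m) = A := by
            rw [Finset.filter_eq_self]
            intro p hp hpm
            have : p ∈ A.filter (fun p => p.2 = m) := Finset.mem_filter.2 ⟨hp, hpm⟩
            rw [he] at this
            exact absurd this (by simp)
          simp [hfwd, h1, he]
        · right
          obtain ⟨p, hp⟩ := hne'
          have hpA : p ∈ A := (Finset.mem_filter.1 hp).1
          have hpm : p.2 = m := (Finset.mem_filter.1 hp).2
          refine ⟨p.1, ?_, ?_, ?_⟩
          · have h1 : p.1 ∈ V := (Finset.mem_product.1 (hA.1 hpA)).1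
            have h2 : p.1 < m := hpm ▸ hA.2.1 p hpA
            exact Finset.mem_erase.2 ⟨by omega, h1⟩
          · ext q
            simp only [Finset.mem_filter, Finset.mem_singleton]
            constructor
            · rintro ⟨hqA, hqm⟩
              have := hA.2.2 q hqA p hpA (by rw [hqm, hpm])
              exact Prod.ext this hqm
            · rintro rfl
              exact ⟨by rwa [show ((p.1 : ℤ), m) = p from Prod.ext rfl hpm.symm], rfl⟩
          · have himg : (A.filter (fun p => p.2 = m)).image Prod.fst = {p.1} := by
              have : A.filter (fun p => p.2 = m) = {(p.1, m)} := by
                ext q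
                simp only [Finset.mem_filter, Finset.mem_singleton]
                constructor
                · rintro ⟨hqA, hqm⟩
                  have := hA.2.2 q hqA p hpA (by rw [hqm, hpm])
                  exact Prod.ext this hqm
                · rintro rfl
                  exact ⟨by rwa [show ((p.1 : ℤ), m) = p from Prod.ext rfl hpm.symm], rfl⟩
              rw [this]
              simp
            simp [hfwd, himg]
      -- rewrite the sum via the bijection
      have hbij : ∑ A ∈ arcsOn V, x ^ (osB V A - 1) =
          ∑ s ∈ (arcsOn V') ×ˢ (insert m V'), x ^ (osB V (bwd s) - 1) := by
        refine Finset.sum_nbij' fwd bwd ?_ ?_ ?_ ?_ ?_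
        · -- fwd maps into the product
          intro A hA
          have hA' := hA
          rw [mem_arcsOn] at hA'
          rw [Finset.mem_product]
          constructor
          · rw [mem_arcsOn]
            refine ⟨?_, fun p hp => hA'.2.1 p (Finset.mem_filter.1 hp).1,
              fun p hp q hq h => hA'.2.2 p (Finset.mem_filter.1 hp).1 q
                (Finset.mem_filter.1 hq).1 h⟩
            intro p hp
            obtain ⟨hpA, hpm⟩ := Finset.mem_filter.1 hp
            obtain ⟨h1, h2⟩ := Finset.mem_product.1 (hA'.1 hpA)
            have hplt := hA'.2.1 p hpA
            have h2m : p.2 ≤ m := V.le_max' p.2 h2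
            refine Finset.mem_product.2 ⟨Finset.mem_erase.2 ⟨by omega, h1⟩,
              Finset.mem_erase.2 ⟨hpm, h2⟩⟩
          · rcases key A hA with ⟨-, heq⟩ | ⟨w, hw, -, heq⟩
            · rw [heq]; exact Finset.mem_insert_self _ _
            · rw [heq]; exact Finset.mem_insert_of_mem hw
        · -- bwd maps into arcsOn V
          intro s hs
          obtain ⟨hs1, hs2⟩ := Finset.mem_product.1 hs
          rw [mem_arcsOn] at hs1 ⊢
          by_cases hc : s.2 = m
          · simp only [hbwd, hc, if_pos rfl]
            exact ⟨hs1.1.trans (Finset.product_subset_product hsubV hsubV),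
              hs1.2.1, hs1.2.2⟩
          · have hcV' : s.2 ∈ V' := by
              rcases Finset.mem_insert.1 hs2 with h | h
              · exact absurd h hc
              · exact h
            simp only [hbwd, if_neg hc]
            refine ⟨?_, ?_, ?_⟩
            · intro p hp
              rcases Finset.mem_insert.1 hp with rfl | hp'
              · exact Finset.mem_product.2 ⟨hsubV hcV', hmV⟩
              · exact Finset.product_subset_product hsubV hsubV (hs1.1 hp')
            · intro p hp
              rcases Finset.mem_insert.1 hp with rfl | hp'
              · exact hlt _ hcV'
              · exact hs1.2.1 p hp'
            · intro p hp q hq hpq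
              have hmem : ∀ r ∈ s.1, r.2 ≠ m := by
                intro r hr
                have := (Finset.mem_product.1 (hs1.1 hr)).2
                exact Finset.ne_of_mem_erase this
              rcases Finset.mem_insert.1 hp with rfl | hp' <;>
                rcases Finset.mem_insert.1 hq with h2 | hq'
              · rw [h2]
              · exact absurd hpq.symm (hmem q hq')
              · rw [h2] at hpq
                exact absurd hpq (hmem p hp')
              · exact hs1.2.2 p hp' q hq' hpq
        · -- bwd ∘ fwd = id
          intro A hA
          have hA' := hA
          rw [mem_arcsOn] at hA'
          rcases key A hA with ⟨he, heq⟩ | ⟨w, hw, hfil, hsnd⟩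
          · rw [heq]
            simp only [hbwd, if_pos rfl]
          · have hwm : w ≠ m := Finset.ne_of_mem_erase hw
            have hfst : (fwd A).1 = A.filter (fun p => p.2 ≠ m) := rfl
            have hsnd2 : WithBot.unbotD m
                ((A.filter (fun p => p.2 = m)).image Prod.fst).max = w := hsnd
            have : bwd (fwd A) = insert (w, m) (A.filter (fun p => p.2 ≠ m)) := by
              simp only [hbwd, hfwd]
              rw [hsnd2, if_neg hwm]
            rw [this]
            ext q
            simp only [Finset.mem_insert, Finset.mem_filter]
            constructor
            · rintro (rfl | ⟨hq, -⟩)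
              · have : (w, m) ∈ A.filter (fun p => p.2 = m) := by
                  rw [hfil]; exact Finset.mem_singleton_self _
                exact (Finset.mem_filter.1 this).1
              · exact hq
            · intro hq
              by_cases hqm : q.2 = m
              · left
                have : q ∈ A.filter (fun p => p.2 = m) := Finset.mem_filter.2 ⟨hq, hqm⟩
                rw [hfil] at this
                exact Finset.mem_singleton.1 this
              · right; exact ⟨hq, hqm⟩
        · -- fwd ∘ bwd = id
          intro s hs
          obtain ⟨hs1, hs2⟩ := Finset.mem_product.1 hs
          rw [mem_arcsOn] at hs1
          have hmem : ∀ r ∈ s.1, r.2 ≠ m := by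
            intro r hr
            have := (Finset.mem_product.1 (hs1.1 hr)).2
            exact Finset.ne_of_mem_erase this
          by_cases hc : s.2 = m
          · have hb : bwd s = s.1 := by simp [hbwd, hc]
            rw [hb]
            have h1 : s.1.filter (fun p => p.2 ≠ m) = s.1 :=
              Finset.filter_eq_self.2 hmem
            have h2 : s.1.filter (fun p => p.2 = m) = ∅ := by
              rw [Finset.filter_eq_empty_iff]
              exact hmem
            simp only [hfwd, h1, h2]
            rw [show s = (s.1, s.2) from rfl]
            simp [hc]
          · have hcV' : s.2 ∈ V' := by
              rcases Finset.mem_insert.1 hs2 with h | h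
              · exact absurd h hc
              · exact h
            have hb : bwd s = insert (s.2, m) s.1 := by simp [hbwd, hc]
            rw [hb]
            have h1 : (insert (s.2, m) s.1).filter (fun p => p.2 ≠ m) = s.1 := by
              rw [Finset.filter_insert, if_neg (by simp)]
              exact Finset.filter_eq_self.2 hmem
            have h2 : (insert (s.2, m) s.1).filter (fun p => p.2 = m) = {(s.2, m)} := by
              rw [Finset.filter_insert, if_pos rfl]
              rw [Finset.filter_eq_empty_iff.2 hmem]
              rfl
            simp only [hfwd, h1, h2]
            rw [show s = (s.1, s.2) from rfl]
            simp
        · -- values agree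
          intro A hA
          rcases key A hA with ⟨he, heq⟩ | ⟨w, hw, hfil, hsnd⟩
          · rw [heq]
            simp only [hbwd, if_pos rfl]
          · have hwm : w ≠ m := Finset.ne_of_mem_erase hw
            have hfst : (fwd A).1 = A.filter (fun p => p.2 ≠ m) := rfl
            have hsnd2 : WithBot.unbotD m
                ((A.filter (fun p => p.2 = m)).image Prod.fst).max = w := hsnd
            have hb : bwd (fwd A) = insert (w, m) (A.filter (fun p => p.2 ≠ m)) := by
              simp only [hbwd, hfwd]
              rw [hsnd2, if_neg hwm]
            have hback : insert (w, m) (A.filter (fun p => p.2 ≠ m)) = A := by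
              rw [mem_arcsOn] at hA
              ext q
              simp only [Finset.mem_insert, Finset.mem_filter]
              constructor
              · rintro (rfl | ⟨hq, -⟩)
                · have : (w, m) ∈ A.filter (fun p => p.2 = m) := by
                    rw [hfil]; exact Finset.mem_singleton_self _
                  exact (Finset.mem_filter.1 this).1
                · exact hq
              · intro hq
                by_cases hqm : q.2 = m
                · left
                  have : q ∈ A.filter (fun p => p.2 = m) := Finset.mem_filter.2 ⟨hq, hqm⟩
                  rw [hfil] at this
                  exact Finset.mem_singleton.1 this
                · right; exact ⟨hq, hqm⟩
            rw [hb, hback]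
      rw [hbij]
      -- now compute the sum over the product
      rw [Finset.sum_product]
      have hosA : ∀ A' ∈ arcsOn V', osB V A' = osB V' A' + 1 := by
        intro A' hA'
        rw [mem_arcsOn] at hA'
        have hnom : ∀ p ∈ A', p.2 ≠ m := by
          intro p hp
          have := (Finset.mem_product.1 (hA'.1 hp)).2
          exact Finset.ne_of_mem_erase this
        unfold osB
        rw [← hVins, Finset.filter_insert, if_pos (fun p hp => hnom p hp)]
        rw [Finset.card_insert_of_notMem (fun h => hmV' (Finset.mem_of_mem_filter _ h))]
      have hosI : ∀ A' ∈ arcsOn V', ∀ c ∈ V',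
          osB V (insert (c, m) A') = osB V' A' := by
        intro A' hA' c hc
        rw [mem_arcsOn] at hA'
        unfold osB
        rw [← hVins, Finset.filter_insert, if_neg (by simp)]
        congr 1
        apply Finset.filter_congr
        intro v hv
        have hvm : v ≠ m := Finset.ne_of_mem_erase hv
        simp only [Finset.mem_insert, eq_iff_iff]
        constructor
        · intro h p hp
          exact h p (Or.inr hp)
        · intro h p hp
          rcases hp with rfl | hp'
          · exact fun hh => hvm hh.symm
          · exact h p hp'
      have hinner : ∀ A' ∈ arcsOn V',
          ∑ c ∈ insert m V', x ^ (osB V (bwd (A', c)) - 1) =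
            (x + (k : ℤ)) * x ^ (osB V' A' - 1) := by
        intro A' hA'
        rw [Finset.sum_insert hmV']
        have h1 : bwd (A', m) = A' := by simp [hbwd]
        have h2 : ∀ c ∈ V', bwd (A', c) = insert (c, m) A' := by
          intro c hc
          simp [hbwd, Finset.ne_of_mem_erase hc]
        rw [h1, hosA A' hA']
        rw [Finset.sum_congr rfl (fun c hc => by rw [h2 c hc, hosI A' hA' c hc])]
        rw [Finset.sum_const, hV'card]
        have hpos : 1 ≤ osB V' A' := osB_pos hV'ne hA'
        have hx : x ^ (osB V' A' + 1 - 1) = x * x ^ (osB V' A' - 1) := by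
          rw [Nat.add_sub_cancel]
          conv_lhs => rw [show osB V' A' = (osB V' A' - 1) + 1 by omega]
          rw [pow_succ]
          ring
        rw [hx]
        ring
      rw [Finset.sum_congr rfl hinner, ← Finset.mul_sum, ih V' hV'card hV'ne x]
      obtain ⟨j, rfl⟩ : ∃ j, k = j + 1 := ⟨k - 1, by omega⟩
      simp only [Nat.add_sub_cancel]
      rw [Finset.prod_range_succ]
      push_cast
      ring
/-- The set of admissible vertex (sign) sets. -/
noncomputable def VS (n : ℕ) : Finset (Finset ℤ) :=
  ((Finset.Icc (-(n : ℤ)) (n : ℤ)).powerset).filter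
    (fun V => (∀ v ∈ V, 1 ≤ |v| ∧ |v| ≤ (n : ℤ)) ∧
      ∀ i ∈ Finset.Icc (1 : ℤ) (n : ℤ), ((i ∈ V ∧ -i ∉ V) ∨ (-i ∈ V ∧ i ∉ V)))

lemma mem_LPB_iff {n : ℕ} {T : Finset ℤ × Finset (ℤ × ℤ)} :
    T ∈ LPB n ↔ T.1 ∈ VS n ∧ T.2 ∈ arcsOn T.1 := by
  unfold LPB VS IsLPB
  simp only [Finset.mem_filter, Finset.mem_product, Finset.mem_powerset, mem_arcsOn]
  constructor
  · rintro ⟨⟨h1, h2⟩, h3, h4, h5, h6⟩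
    refine ⟨⟨h1, h3, h4⟩, ?_, ?_, h6⟩
    · intro p hp
      obtain ⟨ha, hb, -⟩ := h5 p hp
      exact Finset.mem_product.2 ⟨ha, hb⟩
    · intro p hp
      exact (h5 p hp).2.2
  · rintro ⟨⟨h1, h3, h4⟩, h5, h6, h7⟩
    refine ⟨⟨h1, ?_⟩, h3, h4, ?_, h7⟩
    · intro p hp
      obtain ⟨ha, hb⟩ := Finset.mem_product.1 (h5 hp)
      exact Finset.mem_product.2 ⟨h1 ha, h1 hb⟩
    · intro p hp
      obtain ⟨ha, hb⟩ := Finset.mem_product.1 (h5 hp)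
      exact ⟨ha, hb, h6 p hp⟩

lemma LPB_sum_decomp {n : ℕ} (f : Finset ℤ × Finset (ℤ × ℤ) → ℤ) :
    ∑ T ∈ LPB n, f T = ∑ V ∈ VS n, ∑ A ∈ arcsOn V, f (V, A) := by
  rw [← Finset.sum_sigma (VS n) (fun V => arcsOn V) (fun s => f (s.1, s.2))]
  refine Finset.sum_nbij' (fun T => ⟨T.1, T.2⟩) (fun s => (s.1, s.2)) ?_ ?_ ?_ ?_ ?_
  · intro T hT
    rw [Finset.mem_sigma]
    exact ⟨(mem_LPB_iff.1 hT).1, (mem_LPB_iff.1 hT).2⟩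
  · intro s hs
    rw [Finset.mem_sigma] at hs
    exact mem_LPB_iff.2 ⟨hs.1, hs.2⟩
  · intro T hT
    rfl
  · intro s hs
    rfl
  · intro T hT
    rfl

lemma card_of_mem_VS {n : ℕ} {V : Finset ℤ} (hV : V ∈ VS n) : V.card = n := by
  unfold VS at hV
  obtain ⟨-, h1, hx2⟩ := Finset.mem_filter.1 hV
  have hIcc : (Finset.Icc (1 : ℤ) (n : ℤ)).card = n := by
    simp [Int.card_Icc]
  rw [← hIcc]
  refine Finset.card_bij (fun v _ => |v|) ?_ ?_ ?_
  · intro v hv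
    rw [Finset.mem_Icc]
    exact h1 v hv
  · intro v hv w hw hvw
    rcases abs_eq_abs.1 hvw with h | h
    · exact h
    · exfalso
      subst h
      have hw1 := h1 w hw
      have hiw : |w| ∈ Finset.Icc (1 : ℤ) (n : ℤ) := Finset.mem_Icc.2 hw1
      have hmem : |w| ∈ V ∧ -|w| ∈ V := by
        rcases abs_choice w with hc | hc
        · rw [hc]
          exact ⟨hw, hv⟩
        · rw [hc]
          refine ⟨hv, ?_⟩
          rw [neg_neg]
          exact hw
      rcases hx2 |w| hiw with ⟨-, hb⟩ | ⟨-, hb⟩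
      · exact hb hmem.2
      · exact hb hmem.1
  · intro i hi
    rw [Finset.mem_Icc] at hi
    rcases hx2 i (Finset.mem_Icc.2 hi) with ⟨ha, -⟩ | ⟨ha, -⟩
    · exact ⟨i, ha, by show |i| = i; exact abs_of_nonneg (by omega)⟩
    · exact ⟨-i, ha, by show |(-i)| = i; rw [abs_neg]; exact abs_of_nonneg (by omega)⟩

lemma card_VS (n : ℕ) : (VS n).card = 2 ^ n := by
  have hIcc : (Finset.Icc (1 : ℤ) (n : ℤ)).card = n := by
    simp [Int.card_Icc]
  have key : (VS n).card = ((Finset.Icc (1 : ℤ) (n : ℤ)).powerset).card := by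
    refine Finset.card_bij' (fun V _ => V.filter (fun v => 0 < v))
      (fun S _ => S ∪ ((Finset.Icc (1 : ℤ) (n : ℤ)) \ S).image (fun t => -t))
      ?_ ?_ ?_ ?_
    · -- forward maps into powerset
      intro V hV
      unfold VS at hV
      obtain ⟨-, h1, -⟩ := Finset.mem_filter.1 hV
      rw [Finset.mem_powerset]
      intro v hv
      obtain ⟨hvV, hvpos⟩ := Finset.mem_filter.1 hv
      have hb := h1 v hvV
      rw [abs_of_pos hvpos] at hb
      rw [Finset.mem_Icc]
      omega
    · -- backward maps into VS
      intro S hS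
      rw [Finset.mem_powerset] at hS
      unfold VS
      rw [Finset.mem_filter, Finset.mem_powerset]
      have hSmem : ∀ s ∈ S, 1 ≤ s ∧ s ≤ (n : ℤ) := by
        intro s hs
        have := hS hs
        rw [Finset.mem_Icc] at this
        omega
      refine ⟨?_, ?_, ?_⟩
      · intro v hv
        rcases Finset.mem_union.1 hv with h | h
        · have := hSmem v h
          rw [Finset.mem_Icc]
          omega
        · obtain ⟨t, ht, rfl⟩ := Finset.mem_image.1 h
          have := Finset.mem_Icc.1 (Finset.mem_sdiff.1 ht).1
          rw [Finset.mem_Icc]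
          omega
      · intro v hv
        rcases Finset.mem_union.1 hv with h | h
        · have := hSmem v h
          constructor <;> [rw [abs_of_nonneg (by omega)]; rw [abs_of_nonneg (by omega)]] <;> omega
        · obtain ⟨t, ht, rfl⟩ := Finset.mem_image.1 h
          have := Finset.mem_Icc.1 (Finset.mem_sdiff.1 ht).1
          constructor <;> [rw [abs_of_nonpos (by omega)]; rw [abs_of_nonpos (by omega)]] <;> omega
      · intro i hi
        rw [Finset.mem_Icc] at hi
        by_cases hiS : i ∈ S
        · left
          constructor
          · exact Finset.mem_union_left _ hiS
          · intro hcon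
            rcases Finset.mem_union.1 hcon with h | h
            · have := hSmem _ h
              omega
            · obtain ⟨t, ht, h2⟩ := Finset.mem_image.1 h
              obtain ⟨ht1, ht2⟩ := Finset.mem_sdiff.1 ht
              have : t = i := by omega
              exact ht2 (this ▸ hiS)
        · right
          constructor
          · refine Finset.mem_union_right _ (Finset.mem_image.2 ⟨i, ?_, rfl⟩)
            exact Finset.mem_sdiff.2 ⟨Finset.mem_Icc.2 hi, hiS⟩
          · intro hcon
            rcases Finset.mem_union.1 hcon with h | h
            · exact hiS h
            · obtain ⟨t, ht, h2⟩ := Finset.mem_image.1 h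
              have := Finset.mem_Icc.1 (Finset.mem_sdiff.1 ht).1
              omega
    · -- backward ∘ forward = id
      intro V hV
      unfold VS at hV
      obtain ⟨hVsub, h1, h2⟩ := Finset.mem_filter.1 hV
      ext v
      constructor
      · intro hv
        rcases Finset.mem_union.1 hv with h | h
        · exact (Finset.mem_filter.1 h).1
        · obtain ⟨t, ht, rfl⟩ := Finset.mem_image.1 h
          obtain ⟨ht1, ht2⟩ := Finset.mem_sdiff.1 ht
          rcases h2 t ht1 with ⟨ha, -⟩ | ⟨ha, -⟩
          · exfalso
            have := Finset.mem_Icc.1 ht1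
            exact ht2 (Finset.mem_filter.2 ⟨ha, by omega⟩)
          · exact ha
      · intro hv
        have hb := h1 v hv
        rcases lt_trichotomy v 0 with hneg | hzero | hpos
        · refine Finset.mem_union_right _ (Finset.mem_image.2 ⟨-v, ?_, by ring⟩)
          refine Finset.mem_sdiff.2 ⟨?_, ?_⟩
          · rw [Finset.mem_Icc]
            rw [abs_of_nonpos (by omega)] at hb
            omega
          · intro hcon
            have hvm : -v ∈ Finset.Icc (1 : ℤ) (n : ℤ) := by
              rw [Finset.mem_Icc]
              rw [abs_of_nonpos (by omega)] at hb
              omega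
            rcases h2 (-v) hvm with ⟨-, hb2⟩ | ⟨-, hb2⟩
            · exact hb2 (by simpa using hv)
            · exact hb2 (Finset.mem_filter.1 hcon).1
        · exfalso
          rw [hzero] at hb
          simp at hb
        · exact Finset.mem_union_left _ (Finset.mem_filter.2 ⟨hv, hpos⟩)
    · -- forward ∘ backward = id
      intro S hS
      rw [Finset.mem_powerset] at hS
      have hSmem : ∀ s ∈ S, 1 ≤ s ∧ s ≤ (n : ℤ) := by
        intro s hs
        have := hS hs
        rw [Finset.mem_Icc] at this
        omega
      ext v
      simp only [Finset.mem_filter, Finset.mem_union, Finset.mem_image]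
      constructor
      · rintro ⟨h | ⟨t, ht, rfl⟩, hpos⟩
        · exact h
        · exfalso
          have := Finset.mem_Icc.1 (Finset.mem_sdiff.1 ht).1
          omega
      · intro hv
        have := hSmem v hv
        exact ⟨Or.inl hv, by omega⟩
  rw [key, Finset.card_powerset, hIcc]

lemma mem_VS_nonempty {n : ℕ} (hn : 1 ≤ n) {V : Finset ℤ} (hV : V ∈ VS n) :
    V.Nonempty := by
  rw [← Finset.card_pos, card_of_mem_VS hV]
  exact hn

lemma ascPochhammer_int_eval (m : ℕ) (y : ℤ) :
    (ascPochhammer ℤ m).eval y = ∏ k ∈ Finset.range m, (y + (k : ℤ)) := by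
  induction m with
  | zero => simp
  | succ t ih => rw [ascPochhammer_succ_eval, ih, Finset.prod_range_succ]

/-- for `n ≥ 1`,
`∑_{τ ∈ ℒ^B_n} x^{os τ - 1} = 2^n (x+1)_{n-1}`. -/
theorem lpb_enumeration (n : ℕ) (hn : 1 ≤ n) (x : ℤ) :
    ∑ T ∈ LPB n, x ^ (osB T.1 T.2 - 1) =
      2 ^ n * (ascPochhammer ℤ (n - 1)).eval (x + 1) := by
  rw [LPB_sum_decomp (fun T => x ^ (osB T.1 T.2 - 1))]
  rw [Finset.sum_congr rfl (fun V hV =>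
    arcs_sum n V (card_of_mem_VS hV) (mem_VS_nonempty hn hV) x)]
  rw [Finset.sum_const, card_VS, ascPochhammer_int_eval, nsmul_eq_mul]
  push_cast
  ring
end

section
/- For n ≥ 2 and 2 ≤ i ≤ n, let Y_{n,i} be the set of type B linked partitions τ of {1,...,n} such that vertex i is a legal destination, vertex i-1 is in τ but is not a legal destination, and neither (i-1, i) nor (-i, i-1) is an arc of τ. Then Σ_{τ ∈ Y_{n,i}} x^{os(τ)-1} = (i-2)·2^{n-2} (x+1)_{n-2} − (i-2)^2 · 2^{n-2} (x+1)_{n-3}. -/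
open Finset Polynomial
open scoped Classical

/-! ### Auxiliary development -/

noncomputable def PF (S : Finset ℤ) (P : ℤ → Finset ℤ) : Finset (Finset (ℤ × ℤ)) :=
  ((S.biUnion fun v => (P v).image fun a => (a, v)).powerset).filter
    fun A => ∀ p ∈ A, ∀ q ∈ A, p.2 = q.2 → p.1 = q.1

lemma mem_PF {S : Finset ℤ} {P : ℤ → Finset ℤ} {A : Finset (ℤ × ℤ)} :
    A ∈ PF S P ↔ (∀ p ∈ A, p.2 ∈ S ∧ p.1 ∈ P p.2) ∧
      (∀ p ∈ A, ∀ q ∈ A, p.2 = q.2 → p.1 = q.1) := by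
  simp only [PF, mem_filter, mem_powerset]
  constructor
  · rintro ⟨hsub, hfun⟩
    refine ⟨fun p hp => ?_, hfun⟩
    have := hsub hp
    simp only [Finset.mem_biUnion, Finset.mem_image] at this
    obtain ⟨v, hv, a, ha, h⟩ := this
    cases h
    exact ⟨hv, ha⟩
  · rintro ⟨hmem, hfun⟩
    refine ⟨fun p hp => ?_, hfun⟩
    simp only [Finset.mem_biUnion, Finset.mem_image]
    exact ⟨p.2, (hmem p hp).1, p.1, (hmem p hp).2, rfl⟩

lemma PF_sum (P : ℤ → Finset ℤ) (g : ℤ × ℤ → ℤ) (h : ℤ → ℤ) (S : Finset ℤ) :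
    ∑ A ∈ PF S P, (∏ p ∈ A, g p) * ∏ v ∈ S.filter (fun v => ∀ p ∈ A, p.2 ≠ v), h v
      = ∏ v ∈ S, (h v + ∑ a ∈ P v, g (a, v)) := by
  induction S using Finset.induction_on with
  | empty =>
    have hPF : PF ∅ P = {∅} := by
      ext A
      simp only [mem_PF, Finset.mem_singleton]
      constructor
      · rintro ⟨h1, _⟩
        refine Finset.eq_empty_of_forall_notMem fun p hp => ?_
        simpa using (h1 p hp).1
      · rintro rfl
        simp
    simp [hPF]
  | @insert v s hvs ih =>
    classical
    set D : Finset (Finset (ℤ × ℤ)) :=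
      insert ∅ ((P v).image fun a => ({(a, v)} : Finset (ℤ × ℤ))) with hD
    -- bijection
    have key : ∑ A ∈ PF (insert v s) P,
        (∏ p ∈ A, g p) * ∏ w ∈ (insert v s).filter (fun w => ∀ p ∈ A, p.2 ≠ w), h w
        = ∑ q ∈ (PF s P) ×ˢ D,
            (∏ p ∈ (q.1 ∪ q.2), g p) *
              ∏ w ∈ (insert v s).filter (fun w => ∀ p ∈ q.1 ∪ q.2, p.2 ≠ w), h w := by
      refine Finset.sum_nbij'
        (i := fun A => (A.filter (fun p => p.2 ≠ v), A.filter (fun p => p.2 = v)))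
        (j := fun q => q.1 ∪ q.2) ?_ ?_ ?_ ?_ ?_
      · -- maps to
        intro A hA
        rw [mem_PF] at hA
        obtain ⟨hmem, hfun⟩ := hA
        rw [Finset.mem_product]
        constructor
        · rw [mem_PF]
          refine ⟨fun p hp => ?_, fun p hp q hq => hfun p (Finset.mem_filter.1 hp).1 q (Finset.mem_filter.1 hq).1⟩
          rw [Finset.mem_filter] at hp
          have h1 := hmem p hp.1
          have : p.2 ∈ s := by
            rcases Finset.mem_insert.1 h1.1 with h | h
            · exact absurd h hp.2
            · exact h
          exact ⟨this, h1.2⟩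
        · show A.filter (fun p => p.2 = v) ∈ D
          rcases Finset.eq_empty_or_nonempty (A.filter (fun p => p.2 = v)) with he | ⟨p, hp⟩
          · rw [he]; exact Finset.mem_insert_self _ _
          · rw [Finset.mem_filter] at hp
            have heq : A.filter (fun p => p.2 = v) = {(p.1, v)} := by
              ext q
              simp only [Finset.mem_filter, Finset.mem_singleton]
              constructor
              · rintro ⟨hq, hq2⟩
                have := hfun q hq p hp.1 (by rw [hq2, hp.2])
                rw [← this, ← hq2]
              · rintro rfl
                exact ⟨by rw [← hp.2]; exact hp.1, rfl⟩
            rw [heq]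
            refine Finset.mem_insert_of_mem (Finset.mem_image.2 ⟨p.1, ?_, rfl⟩)
            have := (hmem p hp.1).2
            rwa [hp.2] at this
      · -- inverse maps to
        rintro ⟨B, o⟩ hq
        rw [Finset.mem_product] at hq
        obtain ⟨hB, ho⟩ := hq
        rw [mem_PF] at hB ⊢
        obtain ⟨hBmem, hBfun⟩ := hB
        have homem : ∀ p ∈ o, p.2 = v ∧ p.1 ∈ P v := by
          intro p hp
          rcases Finset.mem_insert.1 ho with rfl | hmem
          · exact absurd hp (Finset.notMem_empty p)
          · obtain ⟨a, ha, rfl⟩ := Finset.mem_image.1 hmem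
            rw [Finset.mem_singleton] at hp
            subst hp; exact ⟨rfl, ha⟩
        constructor
        · intro p hp
          rcases Finset.mem_union.1 hp with h | h
          · exact ⟨Finset.mem_insert_of_mem (hBmem p h).1, (hBmem p h).2⟩
          · obtain ⟨h2, h1⟩ := homem p h
            rw [h2]
            exact ⟨Finset.mem_insert_self _ _, h1⟩
        · intro p hp q hq hpq
          rcases Finset.mem_union.1 hp with h | h <;> rcases Finset.mem_union.1 hq with h' | h'
          · exact hBfun p h q h' hpq
          · exfalso
            have := (homem q h').1
            have h2 := (hBmem p h).1
            rw [hpq, this] at h2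
            exact hvs h2
          · exfalso
            have := (homem p h).1
            have h2 := (hBmem q h').1
            rw [← hpq, this] at h2
            exact hvs h2
          · -- both in o : o is empty or singleton
            rcases Finset.mem_insert.1 ho with rfl | hmem
            · exact absurd h (Finset.notMem_empty p)
            · obtain ⟨a, _, rfl⟩ := Finset.mem_image.1 hmem
              rw [Finset.mem_singleton] at h h'
              rw [h, h']
      · -- left inverse
        intro A hA
        show A.filter (fun p => p.2 ≠ v) ∪ A.filter (fun p => p.2 = v) = A
        have : A.filter (fun p => p.2 = v) = A.filter (fun p => ¬ p.2 ≠ v) := by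
          apply Finset.filter_congr; intro p _; simp
        rw [this, Finset.filter_union_filter_not_eq]
      · -- right inverse
        rintro ⟨B, o⟩ hq
        rw [Finset.mem_product] at hq
        obtain ⟨hB, ho⟩ := hq
        rw [mem_PF] at hB
        have hB2 : ∀ p ∈ B, p.2 ≠ v := by
          intro p hp
          have := (hB.1 p hp).1
          intro h; rw [h] at this; exact hvs this
        have ho2 : ∀ p ∈ o, p.2 = v := by
          intro p hp
          rcases Finset.mem_insert.1 ho with rfl | hmem
          · exact absurd hp (Finset.notMem_empty p)
          · obtain ⟨a, _, rfl⟩ := Finset.mem_image.1 hmem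
            rw [Finset.mem_singleton] at hp; subst hp; rfl
        show ((B ∪ o).filter (fun p => p.2 ≠ v), (B ∪ o).filter (fun p => p.2 = v)) = (B, o)
        rw [Finset.filter_union, Finset.filter_union]
        rw [Finset.filter_true_of_mem hB2,
          Finset.filter_false_of_mem (fun p hp => not_not_intro (ho2 p hp)),
          Finset.filter_false_of_mem hB2,
          Finset.filter_true_of_mem ho2, Finset.union_empty, Finset.empty_union]
      · intro A hA
        have : A.filter (fun p => p.2 ≠ v) ∪ A.filter (fun p => p.2 = v) = A := by
          have h2 : A.filter (fun p => p.2 = v) = A.filter (fun p => ¬ p.2 ≠ v) := by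
            apply Finset.filter_congr; intro p _; simp
          rw [h2, Finset.filter_union_filter_not_eq]
        show _ = (∏ p ∈ _ ∪ _, g p) * _
        rw [this]
    rw [key, Finset.sum_product, Finset.prod_insert hvs, ← ih, Finset.mul_sum]
    apply Finset.sum_congr rfl
    intro B hB
    rw [mem_PF] at hB
    have hB2 : ∀ p ∈ B, p.2 ∈ s := fun p hp => (hB.1 p hp).1
    have hBne : ∀ p ∈ B, p.2 ≠ v := fun p hp h => hvs (h ▸ hB2 p hp)
    have hne : (∅ : Finset (ℤ × ℤ)) ∉ (P v).image fun a => ({(a, v)} : Finset (ℤ × ℤ)) := by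
      intro h
      obtain ⟨a, _, h⟩ := Finset.mem_image.1 h
      exact (Finset.singleton_ne_empty _) h
    rw [hD, Finset.sum_insert hne, Finset.sum_image (by
      intro a _ b _ h
      have h2 := Finset.singleton_injective h
      exact (Prod.mk.injEq a v b v ▸ h2).1)]
    have hfilt : ∀ (o : Finset (ℤ×ℤ)), (∀ p ∈ o, p.2 = v) →
        Finset.filter (fun w => ∀ p ∈ B ∪ o, p.2 ≠ w) s
          = Finset.filter (fun w => ∀ p ∈ B, p.2 ≠ w) s := by
      intro o ho
      apply Finset.filter_congr
      intro w hw
      simp only [Finset.mem_union, eq_iff_iff]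
      constructor
      · intro h1 p hp; exact h1 p (Or.inl hp)
      · intro h1 p hp
        rcases hp with hp | hp
        · exact h1 p hp
        · rw [ho p hp]; intro he; exact hvs (he ▸ hw)
    have h1 : ∏ w ∈ Finset.filter (fun w => ∀ p ∈ B, p.2 ≠ w) (insert v s), h w
        = h v * ∏ w ∈ Finset.filter (fun w => ∀ p ∈ B, p.2 ≠ w) s, h w := by
      rw [Finset.filter_insert, if_pos hBne,
        Finset.prod_insert (fun hc => hvs (Finset.mem_filter.1 hc).1)]
    have h2 : ∀ a ∈ P v,
        (∏ p ∈ B ∪ {(a,v)}, g p) *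
          ∏ w ∈ Finset.filter (fun w => ∀ p ∈ B ∪ {(a,v)}, p.2 ≠ w) (insert v s), h w
        = g (a,v) * ((∏ p ∈ B, g p) *
            ∏ w ∈ Finset.filter (fun w => ∀ p ∈ B, p.2 ≠ w) s, h w) := by
      intro a ha
      have hd : Disjoint B {(a,v)} :=
        Finset.disjoint_singleton_right.2 (fun hc => hBne _ hc rfl)
      rw [Finset.prod_union hd, Finset.prod_singleton, Finset.filter_insert, if_neg,
        hfilt {(a,v)} (by simp)]
      · ring
      · push_neg
        exact ⟨(a,v), Finset.mem_union_right _ (Finset.mem_singleton_self _), rfl⟩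
    dsimp only
    rw [Finset.union_empty, h1, Finset.sum_congr rfl h2, ← Finset.sum_mul]
    ring


lemma prod_shift (V E : Finset ℤ) (m : ℤ) (hm : m ∈ V) (hmin : ∀ v ∈ V, m ≤ v)
    (hE : E ⊆ V) (hmE : m ∉ E) (x : ℤ) :
    ∏ v ∈ V \ insert m E, (x + ((V.filter (fun a => a < v ∧ a ∉ E)).card : ℤ))
      = ∏ k ∈ Finset.Icc 1 (V.card - E.card - 1), (x + (k : ℤ)) := by
  classical
  set W := V \ insert m E with hW
  set φ : ℤ → ℕ := fun v => (V.filter (fun a => a < v ∧ a ∉ E)).card with hφ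
  have hmono : ∀ v ∈ V, v ∉ E → ∀ w ∈ V, v < w → φ v < φ w := by
    intro v hv hvE w hw hvw
    apply Finset.card_lt_card
    rw [Finset.ssubset_iff_of_subset]
    · exact ⟨v, Finset.mem_filter.2 ⟨hv, hvw, hvE⟩, by
        intro hc; exact absurd (Finset.mem_filter.1 hc).2.1 (lt_irrefl v)⟩
    · intro a ha
      rw [Finset.mem_filter] at ha ⊢
      exact ⟨ha.1, lt_trans ha.2.1 hvw, ha.2.2⟩
  have hWmem : ∀ v ∈ W, v ∈ V ∧ v ≠ m ∧ v ∉ E := by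
    intro v hv
    have := Finset.mem_sdiff.1 hv
    refine ⟨this.1, ?_, fun hc => this.2 (Finset.mem_insert_of_mem hc)⟩
    intro hc; exact this.2 (hc ▸ Finset.mem_insert_self m E)
  have hinj : ∀ v ∈ W, ∀ w ∈ W, φ v = φ w → v = w := by
    intro v hv w hw hvw
    obtain ⟨hv1, _, hv3⟩ := hWmem v hv
    obtain ⟨hw1, _, hw3⟩ := hWmem w hw
    rcases lt_trichotomy v w with h | h | h
    · exact absurd hvw (Nat.ne_of_lt (hmono v hv1 hv3 w hw1 h))
    · exact h
    · exact absurd hvw.symm (Nat.ne_of_lt (hmono w hw1 hw3 v hv1 h))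
  have hMsub : insert m E ⊆ V := Finset.insert_subset hm hE
  have hcardW : W.card = V.card - E.card - 1 := by
    rw [hW, Finset.card_sdiff_of_subset hMsub, Finset.card_insert_of_notMem hmE, Nat.sub_sub,
      Nat.add_comm]
  have himg : W.image φ = Finset.Icc 1 (V.card - E.card - 1) := by
    apply Finset.eq_of_subset_of_card_le
    · intro k hk
      obtain ⟨v, hv, rfl⟩ := Finset.mem_image.1 hk
      obtain ⟨hv1, hv2, hv3⟩ := hWmem v hv
      rw [Finset.mem_Icc]
      constructor
      · rw [hφ]
        refine Finset.card_pos.2 ⟨m, Finset.mem_filter.2 ⟨hm, ?_, hmE⟩⟩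
        exact lt_of_le_of_ne (hmin v hv1) (Ne.symm hv2)
      · have hsub2 : V.filter (fun a => a < v ∧ a ∉ E) ⊆ V \ insert v E := by
          intro a ha
          rw [Finset.mem_filter] at ha
          rw [Finset.mem_sdiff, Finset.mem_insert]
          push_neg
          exact ⟨ha.1, ne_of_lt ha.2.1, ha.2.2⟩
        have := Finset.card_le_card hsub2
        rw [Finset.card_sdiff_of_subset (Finset.insert_subset hv1 hE),
          Finset.card_insert_of_notMem hv3] at this
        simp only [hφ]
        omega
    · have h1 : (W.image φ).card = W.card :=
        Finset.card_image_of_injOn (fun a ha b hb => hinj a ha b hb)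
      rw [h1, hcardW, Nat.card_Icc]
      omega
  calc ∏ v ∈ W, (x + (φ v : ℤ)) = ∏ k ∈ W.image φ, (x + (k : ℤ)) := by
        rw [Finset.prod_image (fun a ha b hb => hinj a ha b hb)]
    _ = _ := by rw [himg]


lemma filter_abs_card (n : ℕ) (V : Finset ℤ)
    (hone : ∀ j ∈ Finset.Icc (1:ℤ) (n:ℤ), (j ∈ V ∧ -j ∉ V) ∨ (-j ∈ V ∧ j ∉ V))
    (B : ℤ) (hB0 : 0 ≤ B) (hB : B ≤ (n:ℤ)) :
    ((V.filter (fun a => 1 ≤ |a| ∧ |a| ≤ B)).card : ℤ) = B := by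
  classical
  set ψ : ℤ → ℤ := fun k => if k ∈ V then k else -k with hψ
  have habs : ∀ k : ℤ, 1 ≤ k → |ψ k| = k := by
    intro k hk
    simp only [hψ]
    by_cases h : k ∈ V
    · rw [if_pos h]; exact abs_of_nonneg (by omega)
    · rw [if_neg h, abs_neg]; exact abs_of_nonneg (by omega)
  have himg : V.filter (fun a => 1 ≤ |a| ∧ |a| ≤ B) = (Finset.Icc 1 B).image ψ := by
    ext a
    simp only [Finset.mem_filter, Finset.mem_image, Finset.mem_Icc]
    constructor
    · rintro ⟨haV, h1, h2⟩
      refine ⟨|a|, ⟨h1, h2⟩, ?_⟩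
      rcases abs_cases a with ⟨he, hp⟩ | ⟨he, hneg⟩
      · simp only [hψ, he, if_pos haV]
      · simp only [hψ, he]
        rcases hone (-a) (Finset.mem_Icc.2 ⟨by omega, by omega⟩) with h | h
        · exact absurd haV (by simpa using h.2)
        · rw [if_neg h.2]
          omega
    · rintro ⟨k, ⟨hk1, hk2⟩, rfl⟩
      rcases hone k (Finset.mem_Icc.2 ⟨hk1, le_trans hk2 hB⟩) with h | h
      · simp only [hψ, if_pos h.1]
        exact ⟨h.1, by rw [abs_of_nonneg (by omega)]; omega,
          by rw [abs_of_nonneg (by omega)]; omega⟩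
      · simp only [hψ, if_neg h.2]
        exact ⟨h.1, by rw [abs_neg, abs_of_nonneg (by omega)]; omega,
          by rw [abs_neg, abs_of_nonneg (by omega)]; omega⟩
  rw [himg, Finset.card_image_of_injOn, Int.card_Icc]
  · simp; omega
  · intro a ha b hb hab
    rw [Finset.mem_coe, Finset.mem_Icc] at ha hb
    have := habs a ha.1
    rw [hab] at this
    rw [habs b hb.1] at this
    omega


noncomputable def Vsets (n i : ℕ) : Finset (Finset ℤ) :=
  ((Finset.Icc (-(n:ℤ)) (n:ℤ)).powerset).filter (fun V =>
    (∀ v ∈ V, 1 ≤ |v| ∧ |v| ≤ (n:ℤ)) ∧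
    (∀ j ∈ Finset.Icc (1:ℤ) (n:ℤ), (j ∈ V ∧ -j ∉ V) ∨ (-j ∈ V ∧ j ∉ V)) ∧
    (i:ℤ) ∈ V ∧ ((i:ℤ) - 1) ∈ V)

lemma Vsets_card (n i : ℕ) (hi : 3 ≤ i) (hin : i ≤ n) :
    (Vsets n i).card = 2 ^ (n - 2) := by
  classical
  set T0 : Finset ℤ := ((Finset.Icc (1:ℤ) (n:ℤ)).erase (i:ℤ)).erase ((i:ℤ) - 1)
    with hT0
  have hT0sub : T0 ⊆ Finset.Icc (1:ℤ) (n:ℤ) :=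
    (Finset.erase_subset _ _).trans (Finset.erase_subset _ _)
  have hT0mem : ∀ a : ℤ, a ∈ T0 ↔ (1 ≤ a ∧ a ≤ (n:ℤ) ∧ a ≠ (i:ℤ) ∧ a ≠ (i:ℤ) - 1) := by
    intro a
    rw [hT0, Finset.mem_erase, Finset.mem_erase, Finset.mem_Icc]
    constructor
    · rintro ⟨h1, h2, h3, h4⟩; exact ⟨h3, h4, h2, h1⟩
    · rintro ⟨h1, h2, h3, h4⟩; exact ⟨h4, h3, h1, h2⟩
  have hiI : (i:ℤ) ∈ Finset.Icc (1:ℤ) (n:ℤ) := by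
    rw [Finset.mem_Icc]; constructor <;> [omega; exact_mod_cast hin]
  have hcardT0 : T0.card = n - 2 := by
    rw [hT0, Finset.card_erase_of_mem, Finset.card_erase_of_mem hiI, Int.card_Icc]
    · simp; omega
    · rw [Finset.mem_erase, Finset.mem_Icc]
      refine ⟨by omega, by omega, by exact_mod_cast le_trans (by omega : (i:ℤ) - 1 ≤ i) (by exact_mod_cast hin)⟩
  rw [← hcardT0, ← Finset.card_powerset]
  set Ψ : Finset ℤ → Finset ℤ := fun S =>
    (S ∪ {(i:ℤ), (i:ℤ)-1}) ∪ (T0 \ S).image (fun c => -c) with hΨ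
  set Θ : Finset ℤ → Finset ℤ := fun V => V ∩ T0 with hΘ
  apply Finset.card_nbij' Θ Ψ
  · -- Θ maps Vsets into powerset T0
    intro V hV
    rw [Finset.mem_coe, Finset.mem_powerset, hΘ]
    exact Finset.inter_subset_right
  · -- Ψ maps powerset T0 into Vsets
    intro S hS
    rw [Finset.mem_coe, Finset.mem_powerset] at hS
    have hmem : ∀ a : ℤ, a ∈ Ψ S ↔ (a ∈ S ∨ a = (i:ℤ) ∨ a = (i:ℤ)-1 ∨
        (∃ c ∈ T0, c ∉ S ∧ a = -c)) := by
      intro a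
      rw [hΨ]
      simp only [Finset.mem_union, Finset.mem_image, Finset.mem_sdiff,
        Finset.mem_insert, Finset.mem_singleton]
      constructor
      · rintro ((h | (h | h)) | ⟨c, ⟨hc1, hc2⟩, hc3⟩)
        · exact Or.inl h
        · exact Or.inr (Or.inl h)
        · exact Or.inr (Or.inr (Or.inl h))
        · exact Or.inr (Or.inr (Or.inr ⟨c, hc1, hc2, hc3.symm⟩))
      · rintro (h | (h | (h | ⟨c, hc1, hc2, rfl⟩)))
        · exact Or.inl (Or.inl h)
        · exact Or.inl (Or.inr (Or.inl h))
        · exact Or.inl (Or.inr (Or.inr h))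
        · exact Or.inr ⟨c, ⟨hc1, hc2⟩, rfl⟩
    have hSb : ∀ a ∈ S, 1 ≤ a ∧ a ≤ (n:ℤ) ∧ a ≠ (i:ℤ) ∧ a ≠ (i:ℤ)-1 :=
      fun a ha => (hT0mem a).1 (hS ha)
    rw [Vsets, Finset.mem_coe, Finset.mem_filter, Finset.mem_powerset]
    refine ⟨?_, ?_, ?_, ?_, ?_⟩
    · intro a ha
      rw [hmem] at ha
      rw [Finset.mem_Icc]
      rcases ha with h | (h | (h | ⟨c, hc, _, rfl⟩))
      · have := hSb a h; omega
      · subst h; constructor <;> [omega; exact_mod_cast hin]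
      · subst h
        have : (i:ℤ) ≤ (n:ℤ) := by exact_mod_cast hin
        omega
      · have := (hT0mem c).1 hc; omega
    · intro a ha
      rw [hmem] at ha
      rcases ha with h | (h | (h | ⟨c, hc, _, rfl⟩))
      · have := hSb a h
        rw [abs_of_nonneg (by omega)]; omega
      · subst h
        rw [abs_of_nonneg (by positivity)]
        constructor <;> [omega; exact_mod_cast hin]
      · subst h
        have : (i:ℤ) ≤ (n:ℤ) := by exact_mod_cast hin
        rw [abs_of_nonneg (by omega)]; omega
      · have := (hT0mem c).1 hc
        rw [abs_of_nonpos (by omega)]; omega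
    · -- exactly one
      intro j hj
      rw [Finset.mem_Icc] at hj
      have hjpos : (0:ℤ) < j := by omega
      by_cases hji : j = (i:ℤ)
      · left
        refine ⟨(hmem j).2 (Or.inr (Or.inl hji)), fun hc => ?_⟩
        rw [hmem] at hc
        rcases hc with h | (h | (h | ⟨c, hc1, _, hc2⟩))
        · have := hSb _ h; omega
        · omega
        · omega
        · have := (hT0mem c).1 hc1; subst hji; omega
      by_cases hji' : j = (i:ℤ) - 1
      · left
        refine ⟨(hmem j).2 (Or.inr (Or.inr (Or.inl hji'))), fun hc => ?_⟩
        rw [hmem] at hc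
        rcases hc with h | (h | (h | ⟨c, hc1, _, hc2⟩))
        · have := hSb _ h; omega
        · omega
        · omega
        · have := (hT0mem c).1 hc1; omega
      have hjT0 : j ∈ T0 := (hT0mem j).2 ⟨by omega, by omega, hji, hji'⟩
      by_cases hjS : j ∈ S
      · left
        refine ⟨(hmem j).2 (Or.inl hjS), fun hc => ?_⟩
        rw [hmem] at hc
        rcases hc with h | (h | (h | ⟨c, hc1, hcS, hc2⟩))
        · have := hSb _ h; omega
        · omega
        · omega
        · have hcj : c = j := by omega
          exact hcS (hcj ▸ hjS)
      · right
        refine ⟨(hmem (-j)).2 (Or.inr (Or.inr (Or.inr ⟨j, hjT0, hjS, rfl⟩))),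
          fun hc => ?_⟩
        rw [hmem] at hc
        rcases hc with h | (h | (h | ⟨c, hc1, hc2, hc3⟩))
        · exact hjS h
        · omega
        · omega
        · have := (hT0mem c).1 hc1; omega
    · exact (hmem _).2 (Or.inr (Or.inl rfl))
    · exact (hmem _).2 (Or.inr (Or.inr (Or.inl rfl)))
  · -- left inverse : Ψ (Θ V) = V for V ∈ Vsets
    intro V hV
    rw [Vsets, Finset.mem_coe, Finset.mem_filter, Finset.mem_powerset] at hV
    obtain ⟨hVsub, habs, hone, hiV, hi1V⟩ := hV
    rw [hΘ, hΨ]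
    ext a
    simp only [Finset.mem_union, Finset.mem_image, Finset.mem_sdiff,
      Finset.mem_insert, Finset.mem_singleton, Finset.mem_inter]
    constructor
    · rintro ((⟨h, _⟩ | (rfl | rfl)) | ⟨c, ⟨hc1, hc2⟩, rfl⟩)
      · exact h
      · exact hiV
      · exact hi1V
      · have hcb := (hT0mem c).1 hc1
        rcases hone c (Finset.mem_Icc.2 ⟨by omega, by omega⟩) with h | h
        · exact absurd ⟨h.1, hc1⟩ hc2
        · exact h.1
    · intro haV
      have hb := habs a haV
      by_cases h0 : 0 < a
      · by_cases hai : a = (i:ℤ)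
        · exact Or.inl (Or.inr (Or.inl hai))
        by_cases hai' : a = (i:ℤ) - 1
        · exact Or.inl (Or.inr (Or.inr hai'))
        · refine Or.inl (Or.inl ⟨haV, (hT0mem a).2 ⟨by omega, ?_, hai, hai'⟩⟩)
          rw [abs_of_nonneg (by omega)] at hb; omega
      · refine Or.inr ⟨-a, ⟨(hT0mem (-a)).2 ⟨?_, ?_, ?_, ?_⟩, ?_⟩, by ring⟩
        · rw [abs_of_nonpos (by omega)] at hb; omega
        · rw [abs_of_nonpos (by omega)] at hb; omega
        · intro hc
          have : a = -(i:ℤ) := by omega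
          rw [this] at haV
          rcases hone (i:ℤ) hiI with h | h
          · exact h.2 haV
          · exact h.2 hiV
        · intro hc
          have : a = -((i:ℤ)-1) := by omega
          rw [this] at haV
          rcases hone ((i:ℤ)-1) (Finset.mem_Icc.2 ⟨by omega, by
              have : (i:ℤ) ≤ (n:ℤ) := by exact_mod_cast hin
              omega⟩) with h | h
          · exact h.2 haV
          · exact h.2 hi1V
        · intro hc
          rcases hone (-a) (Finset.mem_Icc.2
              ⟨by rw [abs_of_nonpos (by omega)] at hb; omega,
               by rw [abs_of_nonpos (by omega)] at hb; omega⟩) with h | h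
          · exact h.2 (by simpa using haV)
          · exact absurd hc.1 h.2
  · -- right inverse : Θ (Ψ S) = S for S ⊆ T0
    intro S hS
    rw [Finset.mem_coe, Finset.mem_powerset] at hS
    rw [hΘ, hΨ]
    ext a
    simp only [Finset.mem_inter, Finset.mem_union, Finset.mem_image,
      Finset.mem_sdiff, Finset.mem_insert, Finset.mem_singleton]
    constructor
    · rintro ⟨(h | (rfl | rfl)) | ⟨c, ⟨hc1, _⟩, rfl⟩, haT⟩
      · exact h
      · exact absurd ((hT0mem _).1 haT).2.2.1 (fun hh => hh rfl)
      · exact absurd ((hT0mem _).1 haT).2.2.2 (fun hh => hh rfl)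
      · have h1 := (hT0mem c).1 hc1
        have h2 := (hT0mem (-c)).1 haT
        omega
    · intro ha
      exact ⟨Or.inl (Or.inl ha), hS ha⟩


section PerV

variable (n i : ℕ) (x : ℤ) (V : Finset ℤ)

lemma Vsets_facts (hn2 : 2 ≤ n) (hi : 3 ≤ i) (hin : i ≤ n) (hV : V ∈ Vsets n i) :
    V.card = n ∧ (i:ℤ) ∈ V ∧ ((i:ℤ)-1) ∈ V ∧ V.Nonempty := by
  rw [Vsets, Finset.mem_filter, Finset.mem_powerset] at hV
  obtain ⟨hVsub, habs, hone, hiV, hi1V⟩ := hV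
  have hcard : V.card = n := by
    have h1 : V.filter (fun a => 1 ≤ |a| ∧ |a| ≤ (n:ℤ)) = V :=
      Finset.filter_true_of_mem habs
    have h2 := filter_abs_card n V hone (n:ℤ) (by positivity) le_rfl
    rw [h1] at h2
    exact_mod_cast h2
  exact ⟨hcard, hiV, hi1V, Finset.card_pos.1 (by omega)⟩

lemma min_facts (hn2 : 2 ≤ n) (hi : 3 ≤ i) (hin : i ≤ n) (hV : V ∈ Vsets n i)
    (hne : V.Nonempty) : V.min' hne ≤ 1 := by
  rw [Vsets, Finset.mem_filter, Finset.mem_powerset] at hV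
  obtain ⟨hVsub, habs, hone, hiV, hi1V⟩ := hV
  rcases hone 1 (Finset.mem_Icc.2 ⟨le_refl _, by exact_mod_cast Nat.one_le_iff_ne_zero.2 (by omega)⟩) with h | h
  · exact Finset.min'_le V 1 h.1
  · exact le_trans (Finset.min'_le V (-1) h.1) (by omega)

/-- the common count: vertices of absolute value at most `i-2` -/
lemma count_S0 (hi : 3 ≤ i) (hin : i ≤ n) (hV : V ∈ Vsets n i) :
    ((V.filter (fun a => 1 ≤ |a| ∧ |a| ≤ (i:ℤ) - 2)).card : ℤ) = (i:ℤ) - 2 := by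
  rw [Vsets, Finset.mem_filter, Finset.mem_powerset] at hV
  obtain ⟨hVsub, habs, hone, hiV, hi1V⟩ := hV
  have hn' : ((i:ℤ) - 2) ≤ (n:ℤ) := by
    have : (i:ℤ) ≤ (n:ℤ) := by exact_mod_cast hin
    omega
  exact filter_abs_card n V hone ((i:ℤ)-2) (by omega) hn'

lemma S0_iff (hi : 3 ≤ i) (hin : i ≤ n) (hV : V ∈ Vsets n i) :
    ∀ a ∈ V, ((a < (i:ℤ) ∧ |a| < (i:ℤ) ∧ a ≠ (i:ℤ)-1) ↔
      (1 ≤ |a| ∧ |a| ≤ (i:ℤ) - 2)) := by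
  rw [Vsets, Finset.mem_filter, Finset.mem_powerset] at hV
  obtain ⟨hVsub, habs, hone, hiV, hi1V⟩ := hV
  intro a ha
  constructor
  · rintro ⟨h1, h2, h3⟩
    refine ⟨(habs a ha).1, ?_⟩
    by_contra hc
    push_neg at hc
    have h4 : |a| = (i:ℤ) - 1 := by omega
    rcases abs_cases a with ⟨he, _⟩ | ⟨he, _⟩
    · omega
    · have haneg : a = -((i:ℤ)-1) := by omega
      rcases hone ((i:ℤ)-1) (Finset.mem_Icc.2 ⟨by omega, by
          have : (i:ℤ) ≤ (n:ℤ) := by exact_mod_cast hin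
          omega⟩) with h | h
      · exact h.2 (haneg ▸ ha)
      · exact h.2 hi1V
  · rintro ⟨h1, h2⟩
    have hii : (3:ℤ) ≤ (i:ℤ) := by exact_mod_cast hi
    rcases abs_cases a with ⟨he, _⟩ | ⟨he, _⟩ <;>
      exact ⟨by omega, by omega, by omega⟩

lemma S0_eq_i (hi : 3 ≤ i) (hin : i ≤ n) (hV : V ∈ Vsets n i)
    (P : ℤ → Prop) [DecidablePred P]
    (hP : ∀ a ∈ V, (P a ↔ (1 ≤ |a| ∧ |a| ≤ (i:ℤ) - 2))) :
    ((V.filter P).card : ℤ) = (i:ℤ) - 2 := by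
  rw [Finset.filter_congr hP]
  exact count_S0 n i V hi hin hV

end PerV


section Reval

variable (n i : ℕ) (x : ℤ) (V : Finset ℤ)

lemma R1_eval (hn2 : 2 ≤ n) (hi : 3 ≤ i) (hin : i ≤ n) (hV : V ∈ Vsets n i)
    (hne : V.Nonempty) :
    ∏ v ∈ V, ((if v = V.min' hne then 1 else if v = (i:ℤ) then 0 else x) +
        ∑ a ∈ V.filter (· < v),
          (if v = (i:ℤ) then (if |a| < (i:ℤ) ∧ a ≠ (i:ℤ)-1 then (1:ℤ) else 0)
           else if a = (i:ℤ) then 0 else 1))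
      = ((i:ℤ) - 2) * ∏ k ∈ Finset.Icc 1 (n-2), (x + (k:ℤ)) := by
  classical
  obtain ⟨hcard, hiV, hi1V, -⟩ := Vsets_facts n i V hn2 hi hin hV
  set m := V.min' hne with hmdef
  have hm : m ∈ V := V.min'_mem hne
  have hmin : ∀ v ∈ V, m ≤ v := fun v hv => V.min'_le v hv
  have hm1 : m ≤ 1 := min_facts n i V hn2 hi hin hV hne
  have hii : (3:ℤ) ≤ (i:ℤ) := by exact_mod_cast hi
  have hmi : m ≠ (i:ℤ) := by omega
  have hsub : insert m {(i:ℤ)} ⊆ V := by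
    intro a ha
    rcases Finset.mem_insert.1 ha with rfl | ha
    · exact hm
    · rw [Finset.mem_singleton] at ha; exact ha ▸ hiV
  rw [← Finset.prod_sdiff hsub]
  have hfm : ((if m = m then (1:ℤ) else if m = (i:ℤ) then 0 else x) +
      ∑ a ∈ V.filter (· < m),
        (if m = (i:ℤ) then (if |a| < (i:ℤ) ∧ a ≠ (i:ℤ)-1 then (1:ℤ) else 0)
         else if a = (i:ℤ) then 0 else 1)) = 1 := by
    rw [if_pos rfl, Finset.filter_false_of_mem (fun a ha => not_lt.2 (hmin a ha)),
      Finset.sum_empty, add_zero]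
  have hfi : ((if (i:ℤ) = m then (1:ℤ) else if (i:ℤ) = (i:ℤ) then 0 else x) +
      ∑ a ∈ V.filter (· < (i:ℤ)),
        (if (i:ℤ) = (i:ℤ) then (if |a| < (i:ℤ) ∧ a ≠ (i:ℤ)-1 then (1:ℤ) else 0)
         else if a = (i:ℤ) then 0 else 1)) = (i:ℤ) - 2 := by
    rw [if_neg (Ne.symm hmi), if_pos rfl, zero_add]
    have hcong : ∀ a ∈ V.filter (· < (i:ℤ)),
        (if (i:ℤ) = (i:ℤ) then (if |a| < (i:ℤ) ∧ a ≠ (i:ℤ)-1 then (1:ℤ) else 0)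
         else if a = (i:ℤ) then 0 else 1)
        = (if |a| < (i:ℤ) ∧ a ≠ (i:ℤ)-1 then (1:ℤ) else 0) := fun a _ => if_pos rfl
    rw [Finset.sum_congr rfl hcong, Finset.sum_boole, Finset.filter_filter]
    exact S0_eq_i n i V hi hin hV _ (fun a ha => by
      refine Iff.trans ?_ (S0_iff n i V hi hin hV a ha)
      constructor
      · rintro ⟨h1, h2, h3⟩; exact ⟨h1, h2, h3⟩
      · rintro ⟨h1, h2, h3⟩; exact ⟨h1, h2, h3⟩)
  have hrest : ∏ v ∈ V \ insert m {(i:ℤ)},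
      ((if v = m then (1:ℤ) else if v = (i:ℤ) then 0 else x) +
        ∑ a ∈ V.filter (· < v),
          (if v = (i:ℤ) then (if |a| < (i:ℤ) ∧ a ≠ (i:ℤ)-1 then (1:ℤ) else 0)
           else if a = (i:ℤ) then 0 else 1))
      = ∏ k ∈ Finset.Icc 1 (n-2), (x + (k:ℤ)) := by
    have hstep : ∀ v ∈ V \ insert m {(i:ℤ)},
        ((if v = m then (1:ℤ) else if v = (i:ℤ) then 0 else x) +
          ∑ a ∈ V.filter (· < v),
            (if v = (i:ℤ) then (if |a| < (i:ℤ) ∧ a ≠ (i:ℤ)-1 then (1:ℤ) else 0)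
             else if a = (i:ℤ) then 0 else 1))
        = x + ((V.filter (fun a => a < v ∧ a ∉ ({(i:ℤ)} : Finset ℤ))).card : ℤ) := by
      intro v hv
      have hv' := Finset.mem_sdiff.1 hv
      have hvm : v ≠ m := fun hc =>
        hv'.2 (by rw [hc]; exact Finset.mem_insert_self m _)
      have hvi : v ≠ (i:ℤ) := fun hc =>
        hv'.2 (Finset.mem_insert_of_mem (Finset.mem_singleton.2 hc))
      rw [if_neg hvm, if_neg hvi]
      congr 1
      simp only [if_neg hvi]
      have : ∀ a : ℤ, (if a = (i:ℤ) then (0:ℤ) else 1)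
          = (if a ∉ ({(i:ℤ)} : Finset ℤ) then (1:ℤ) else 0) := by
        intro a
        by_cases h : a = (i:ℤ) <;> simp [h]
      rw [Finset.sum_congr rfl (fun a _ => this a), Finset.sum_boole,
        Finset.filter_filter]
    rw [Finset.prod_congr rfl hstep,
      prod_shift V {(i:ℤ)} m hm hmin (Finset.singleton_subset_iff.2 hiV)
        (by rw [Finset.mem_singleton]; exact hmi) x]
    have h2 : V.card - ({(i:ℤ)} : Finset ℤ).card - 1 = n - 2 := by
      rw [hcard, Finset.card_singleton]
      omega
    rw [h2]
  rw [hrest, Finset.prod_insert (by rw [Finset.mem_singleton]; exact hmi),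
    Finset.prod_singleton, hfm, hfi, one_mul, mul_comm]

lemma R2_eval (hn2 : 2 ≤ n) (hi : 3 ≤ i) (hin : i ≤ n) (hV : V ∈ Vsets n i)
    (hne : V.Nonempty) :
    ∏ v ∈ V, ((if v = (i:ℤ) ∨ v = (i:ℤ)-1 then 0 else if v = V.min' hne then 1 else x) +
        ∑ a ∈ V.filter (· < v),
          (if a = (i:ℤ) ∨ a = (i:ℤ)-1 then 0
           else if v = (i:ℤ) ∨ v = (i:ℤ)-1 then (if |a| < v then (1:ℤ) else 0)
           else 1))
      = ((i:ℤ) - 2) * (((i:ℤ) - 2) * ∏ k ∈ Finset.Icc 1 (n-3), (x + (k:ℤ))) := by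
  classical
  obtain ⟨hcard, hiV, hi1V, -⟩ := Vsets_facts n i V hn2 hi hin hV
  set m := V.min' hne with hmdef
  have hm : m ∈ V := V.min'_mem hne
  have hmin : ∀ v ∈ V, m ≤ v := fun v hv => V.min'_le v hv
  have hm1 : m ≤ 1 := min_facts n i V hn2 hi hin hV hne
  have hii : (3:ℤ) ≤ (i:ℤ) := by exact_mod_cast hi
  have hmi : m ≠ (i:ℤ) := by omega
  have hmi1 : m ≠ (i:ℤ)-1 := by omega
  have hii1 : (i:ℤ) ≠ (i:ℤ)-1 := by omega
  set E : Finset ℤ := {(i:ℤ), (i:ℤ)-1} with hE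
  have hEsub : E ⊆ V := by
    intro a ha
    rcases Finset.mem_insert.1 ha with rfl | ha
    · exact hiV
    · rw [Finset.mem_singleton] at ha; exact ha ▸ hi1V
  have hmE : m ∉ E := by
    rw [hE, Finset.mem_insert, Finset.mem_singleton]
    push_neg
    exact ⟨hmi, hmi1⟩
  have hsub : insert m E ⊆ V := Finset.insert_subset hm hEsub
  rw [← Finset.prod_sdiff hsub]
  have hfm : ((if m = (i:ℤ) ∨ m = (i:ℤ)-1 then (0:ℤ) else if m = m then 1 else x) +
      ∑ a ∈ V.filter (· < m),
        (if a = (i:ℤ) ∨ a = (i:ℤ)-1 then 0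
         else if m = (i:ℤ) ∨ m = (i:ℤ)-1 then (if |a| < m then (1:ℤ) else 0)
         else 1)) = 1 := by
    rw [if_neg (by push_neg; exact ⟨hmi, hmi1⟩), if_pos rfl,
      Finset.filter_false_of_mem (fun a ha => not_lt.2 (hmin a ha)),
      Finset.sum_empty, add_zero]
  have habs' : ∀ a ∈ V, 1 ≤ |a| := by
    rw [Vsets, Finset.mem_filter] at hV
    exact fun a ha => (hV.2.1 a ha).1
  have hfi : ((if (i:ℤ) = (i:ℤ) ∨ (i:ℤ) = (i:ℤ)-1 then (0:ℤ) else if (i:ℤ) = m then 1 else x) +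
      ∑ a ∈ V.filter (· < (i:ℤ)),
        (if a = (i:ℤ) ∨ a = (i:ℤ)-1 then 0
         else if (i:ℤ) = (i:ℤ) ∨ (i:ℤ) = (i:ℤ)-1 then (if |a| < (i:ℤ) then (1:ℤ) else 0)
         else 1)) = (i:ℤ) - 2 := by
    rw [if_pos (Or.inl rfl), zero_add]
    have : ∀ a ∈ V.filter (· < (i:ℤ)),
        (if a = (i:ℤ) ∨ a = (i:ℤ)-1 then (0:ℤ)
         else if (i:ℤ) = (i:ℤ) ∨ (i:ℤ) = (i:ℤ)-1 then (if |a| < (i:ℤ) then (1:ℤ) else 0)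
         else 1)
        = (if ¬(a = (i:ℤ) ∨ a = (i:ℤ)-1) ∧ |a| < (i:ℤ) then (1:ℤ) else 0) := by
      intro a _
      by_cases h1 : a = (i:ℤ) ∨ a = (i:ℤ)-1
      · rw [if_pos h1, if_neg (fun hc => hc.1 h1)]
      · rw [if_neg h1, if_pos (Or.inl rfl)]
        by_cases h2 : |a| < (i:ℤ)
        · rw [if_pos h2, if_pos ⟨h1, h2⟩]
        · rw [if_neg h2, if_neg (fun hc => h2 hc.2)]
    rw [Finset.sum_congr rfl this, Finset.sum_boole, Finset.filter_filter]
    exact S0_eq_i n i V hi hin hV _ (fun a ha => by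
      refine Iff.trans ?_ (S0_iff n i V hi hin hV a ha)
      constructor
      · rintro ⟨h1, h2, h3⟩
        push_neg at h2
        exact ⟨h1, h3, h2.2⟩
      · rintro ⟨h1, h2, h3⟩
        exact ⟨h1, by push_neg; exact ⟨by omega, h3⟩, h2⟩)
  have hfi1 : ((if (i:ℤ)-1 = (i:ℤ) ∨ (i:ℤ)-1 = (i:ℤ)-1 then (0:ℤ) else if (i:ℤ)-1 = m then 1 else x) +
      ∑ a ∈ V.filter (· < (i:ℤ)-1),
        (if a = (i:ℤ) ∨ a = (i:ℤ)-1 then 0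
         else if (i:ℤ)-1 = (i:ℤ) ∨ (i:ℤ)-1 = (i:ℤ)-1 then (if |a| < (i:ℤ)-1 then (1:ℤ) else 0)
         else 1)) = (i:ℤ) - 2 := by
    rw [if_pos (Or.inr rfl), zero_add]
    have : ∀ a ∈ V.filter (· < (i:ℤ)-1),
        (if a = (i:ℤ) ∨ a = (i:ℤ)-1 then (0:ℤ)
         else if (i:ℤ)-1 = (i:ℤ) ∨ (i:ℤ)-1 = (i:ℤ)-1 then (if |a| < (i:ℤ)-1 then (1:ℤ) else 0)
         else 1)
        = (if ¬(a = (i:ℤ) ∨ a = (i:ℤ)-1) ∧ |a| < (i:ℤ)-1 then (1:ℤ) else 0) := by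
      intro a _
      by_cases h1 : a = (i:ℤ) ∨ a = (i:ℤ)-1
      · rw [if_pos h1, if_neg (fun hc => hc.1 h1)]
      · rw [if_neg h1, if_pos (Or.inr rfl)]
        by_cases h2 : |a| < (i:ℤ)-1
        · rw [if_pos h2, if_pos ⟨h1, h2⟩]
        · rw [if_neg h2, if_neg (fun hc => h2 hc.2)]
    rw [Finset.sum_congr rfl this, Finset.sum_boole, Finset.filter_filter]
    exact S0_eq_i n i V hi hin hV _ (fun a ha => by
      have h4 := habs' a ha
      have hii' : (3:ℤ) ≤ (i:ℤ) := hii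
      constructor
      · rintro ⟨h1, h2, h3⟩
        exact ⟨h4, by omega⟩
      · rintro ⟨h1, h2⟩
        rcases abs_cases a with ⟨he, _⟩ | ⟨he, _⟩ <;>
          exact ⟨by omega, by push_neg; exact ⟨by omega, by omega⟩, by omega⟩)
  have hrest : ∏ v ∈ V \ insert m E,
      ((if v = (i:ℤ) ∨ v = (i:ℤ)-1 then (0:ℤ) else if v = m then 1 else x) +
        ∑ a ∈ V.filter (· < v),
          (if a = (i:ℤ) ∨ a = (i:ℤ)-1 then 0
           else if v = (i:ℤ) ∨ v = (i:ℤ)-1 then (if |a| < v then (1:ℤ) else 0)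
           else 1))
      = ∏ k ∈ Finset.Icc 1 (n-3), (x + (k:ℤ)) := by
    have hstep : ∀ v ∈ V \ insert m E,
        ((if v = (i:ℤ) ∨ v = (i:ℤ)-1 then (0:ℤ) else if v = m then 1 else x) +
          ∑ a ∈ V.filter (· < v),
            (if a = (i:ℤ) ∨ a = (i:ℤ)-1 then 0
             else if v = (i:ℤ) ∨ v = (i:ℤ)-1 then (if |a| < v then (1:ℤ) else 0)
             else 1))
        = x + ((V.filter (fun a => a < v ∧ a ∉ E)).card : ℤ) := by
      intro v hv
      have hv' := Finset.mem_sdiff.1 hv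
      have hvm : v ≠ m := fun hc =>
        hv'.2 (by rw [hc]; exact Finset.mem_insert_self m _)
      have hvE : v ∉ E := fun hc => hv'.2 (Finset.mem_insert_of_mem hc)
      have hvor : ¬(v = (i:ℤ) ∨ v = (i:ℤ)-1) := by
        rw [hE, Finset.mem_insert, Finset.mem_singleton] at hvE
        push_neg at hvE ⊢
        exact hvE
      rw [if_neg hvor, if_neg hvm]
      congr 1
      have : ∀ a ∈ V.filter (· < v),
          (if a = (i:ℤ) ∨ a = (i:ℤ)-1 then (0:ℤ)
           else if v = (i:ℤ) ∨ v = (i:ℤ)-1 then (if |a| < v then (1:ℤ) else 0)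
           else 1)
          = (if a ∉ E then (1:ℤ) else 0) := by
        intro a _
        by_cases h1 : a = (i:ℤ) ∨ a = (i:ℤ)-1
        · rw [if_pos h1, if_neg (by
            rw [hE, Finset.mem_insert, Finset.mem_singleton]
            exact not_not_intro h1)]
        · rw [if_neg h1, if_neg hvor, if_pos (by
            rw [hE, Finset.mem_insert, Finset.mem_singleton]
            push_neg at h1 ⊢
            exact h1)]
      rw [Finset.sum_congr rfl this, Finset.sum_boole, Finset.filter_filter]
    rw [Finset.prod_congr rfl hstep, prod_shift V E m hm hmin hEsub hmE x]
    have h2 : V.card - E.card - 1 = n - 3 := by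
      rw [hcard, hE,
        Finset.card_insert_of_notMem (by rw [Finset.mem_singleton]; omega),
        Finset.card_singleton]
      omega
    rw [h2]
  rw [hrest, Finset.prod_insert hmE]
  rw [hE, Finset.prod_insert (by rw [Finset.mem_singleton]; omega), Finset.prod_singleton]
  rw [hfm, hfi, hfi1, one_mul, mul_comm]
  ring

end Reval


section Weights

variable (n i : ℕ) (x : ℤ)

lemma W1_eq (hi : 3 ≤ i) (V : Finset ℤ) (m : ℤ) (hm : m ∈ V)
    (hmin : ∀ v ∈ V, m ≤ v) (hmi : m ≠ (i:ℤ)) (hiV : (i:ℤ) ∈ V)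
    (A : Finset (ℤ × ℤ)) (hA : A ∈ PF V (fun v => V.filter (· < v))) :
    (∏ p ∈ A, (if p.2 = (i:ℤ) then (if |p.1| < (i:ℤ) ∧ p.1 ≠ (i:ℤ)-1 then (1:ℤ) else 0)
        else if p.1 = (i:ℤ) then 0 else 1)) *
      ∏ v ∈ V.filter (fun v => ∀ p ∈ A, p.2 ≠ v),
        (if v = m then (1:ℤ) else if v = (i:ℤ) then 0 else x)
    = if ((∃ p ∈ A, p.2 = (i:ℤ) ∧ |p.1| < (i:ℤ)) ∧ (∀ p ∈ A, p.1 ≠ (i:ℤ)) ∧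
          ((i:ℤ)-1, (i:ℤ)) ∉ A)
      then x ^ ((V.filter (fun v => ∀ p ∈ A, p.2 ≠ v)).card - 1) else 0 := by
  classical
  rw [mem_PF] at hA
  obtain ⟨hmem, hfun⟩ := hA
  have harc : ∀ p ∈ A, p.1 ∈ V ∧ p.1 < p.2 ∧ p.2 ∈ V := by
    intro p hp
    obtain ⟨h1, h2⟩ := hmem p hp
    rw [Finset.mem_filter] at h2
    exact ⟨h2.1, h2.2, h1⟩
  have hnotm : ∀ p ∈ A, p.2 ≠ m := by
    intro p hp hc
    have h1 := (harc p hp).2.1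
    have h2 := hmin p.1 (harc p hp).1
    omega
  by_cases hcond : (∃ p ∈ A, p.2 = (i:ℤ) ∧ |p.1| < (i:ℤ)) ∧
      (∀ p ∈ A, p.1 ≠ (i:ℤ)) ∧ ((i:ℤ)-1, (i:ℤ)) ∉ A
  · rw [if_pos hcond]
    obtain ⟨⟨p₀, hp₀A, hp₀2, hp₀abs⟩, hnoorig, hC3⟩ := hcond
    have hg : ∀ p ∈ A,
        (if p.2 = (i:ℤ) then (if |p.1| < (i:ℤ) ∧ p.1 ≠ (i:ℤ)-1 then (1:ℤ) else 0)
         else if p.1 = (i:ℤ) then 0 else 1) = 1 := by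
      intro p hp
      by_cases h2 : p.2 = (i:ℤ)
      · rw [if_pos h2, if_pos]
        have heq : p.1 = p₀.1 := hfun p hp p₀ hp₀A (h2.trans hp₀2.symm)
        refine ⟨heq ▸ hp₀abs, ?_⟩
        intro hc
        apply hC3
        have : p = ((i:ℤ)-1, (i:ℤ)) := Prod.ext hc h2
        exact this ▸ hp
      · rw [if_neg h2, if_neg (hnoorig p hp)]
    rw [Finset.prod_eq_one hg, one_mul]
    have hmF : m ∈ V.filter (fun v => ∀ p ∈ A, p.2 ≠ v) :=
      Finset.mem_filter.2 ⟨hm, fun p hp => hnotm p hp⟩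
    rw [← Finset.mul_prod_erase _ _ hmF, if_pos rfl, one_mul]
    have hxs : ∀ v ∈ (V.filter (fun v => ∀ p ∈ A, p.2 ≠ v)).erase m,
        (if v = m then (1:ℤ) else if v = (i:ℤ) then 0 else x) = x := by
      intro v hv
      rw [Finset.mem_erase] at hv
      rw [if_neg hv.1, if_neg]
      intro hc
      exact (Finset.mem_filter.1 hv.2).2 p₀ hp₀A (hp₀2.trans hc.symm)
    rw [Finset.prod_congr rfl hxs, Finset.prod_const, Finset.card_erase_of_mem hmF]
  · rw [if_neg hcond]
    by_cases hex : ∃ p ∈ A, p.2 = (i:ℤ)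
    · obtain ⟨p₀, hp₀, hp₀2⟩ := hex
      have hzero : ∃ p ∈ A,
          (if p.2 = (i:ℤ) then (if |p.1| < (i:ℤ) ∧ p.1 ≠ (i:ℤ)-1 then (1:ℤ) else 0)
           else if p.1 = (i:ℤ) then 0 else 1) = 0 := by
        by_cases c1 : |p₀.1| < (i:ℤ)
        · by_cases c2 : p₀.1 = (i:ℤ)-1
          · exact ⟨p₀, hp₀, by rw [if_pos hp₀2, if_neg (fun hc => hc.2 c2)]⟩
          · have hq : ∃ q ∈ A, q.1 = (i:ℤ) := by
              by_contra hno
              push_neg at hno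
              apply hcond
              refine ⟨⟨p₀, hp₀, hp₀2, c1⟩, hno, ?_⟩
              intro hc
              have h3 := hfun _ hc p₀ hp₀ (by rw [hp₀2])
              exact c2 h3.symm
            obtain ⟨q, hqA, hq1⟩ := hq
            refine ⟨q, hqA, ?_⟩
            have hq2 : q.2 ≠ (i:ℤ) := by
              intro hc
              have := (harc q hqA).2.1
              omega
            rw [if_neg hq2, if_pos hq1]
        · exact ⟨p₀, hp₀, by rw [if_pos hp₀2, if_neg (fun hc => c1 hc.1)]⟩
      obtain ⟨p, hp, h0⟩ := hzero
      rw [Finset.prod_eq_zero hp h0, zero_mul]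
    · push_neg at hex
      have hiF : (i:ℤ) ∈ V.filter (fun v => ∀ p ∈ A, p.2 ≠ v) :=
        Finset.mem_filter.2 ⟨hiV, hex⟩
      rw [Finset.prod_eq_zero hiF (by rw [if_neg (Ne.symm hmi), if_pos rfl]), mul_zero]

lemma W2_eq (hi : 3 ≤ i) (V : Finset ℤ) (m : ℤ) (hm : m ∈ V)
    (hmin : ∀ v ∈ V, m ≤ v) (hmi : m ≠ (i:ℤ)) (hmi1 : m ≠ (i:ℤ)-1)
    (hiV : (i:ℤ) ∈ V) (hi1V : ((i:ℤ)-1) ∈ V)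
    (A : Finset (ℤ × ℤ)) (hA : A ∈ PF V (fun v => V.filter (· < v))) :
    (∏ p ∈ A, (if p.1 = (i:ℤ) ∨ p.1 = (i:ℤ)-1 then (0:ℤ)
        else if p.2 = (i:ℤ) ∨ p.2 = (i:ℤ)-1 then (if |p.1| < p.2 then (1:ℤ) else 0)
        else 1)) *
      ∏ v ∈ V.filter (fun v => ∀ p ∈ A, p.2 ≠ v),
        (if v = (i:ℤ) ∨ v = (i:ℤ)-1 then (0:ℤ) else if v = m then 1 else x)
    = if ((∃ p ∈ A, p.2 = (i:ℤ) ∧ |p.1| < (i:ℤ)) ∧ (∀ p ∈ A, p.1 ≠ (i:ℤ)) ∧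
          ((i:ℤ)-1, (i:ℤ)) ∉ A ∧
          (∃ p ∈ A, p.2 = (i:ℤ)-1 ∧ |p.1| < (i:ℤ)-1) ∧ (∀ p ∈ A, p.1 ≠ (i:ℤ)-1))
      then x ^ ((V.filter (fun v => ∀ p ∈ A, p.2 ≠ v)).card - 1) else 0 := by
  classical
  rw [mem_PF] at hA
  obtain ⟨hmem, hfun⟩ := hA
  have harc : ∀ p ∈ A, p.1 ∈ V ∧ p.1 < p.2 ∧ p.2 ∈ V := by
    intro p hp
    obtain ⟨h1, h2⟩ := hmem p hp
    rw [Finset.mem_filter] at h2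
    exact ⟨h2.1, h2.2, h1⟩
  have hnotm : ∀ p ∈ A, p.2 ≠ m := by
    intro p hp hc
    have h1 := (harc p hp).2.1
    have h2 := hmin p.1 (harc p hp).1
    omega
  by_cases hcond : (∃ p ∈ A, p.2 = (i:ℤ) ∧ |p.1| < (i:ℤ)) ∧
      (∀ p ∈ A, p.1 ≠ (i:ℤ)) ∧ ((i:ℤ)-1, (i:ℤ)) ∉ A ∧
      (∃ p ∈ A, p.2 = (i:ℤ)-1 ∧ |p.1| < (i:ℤ)-1) ∧ (∀ p ∈ A, p.1 ≠ (i:ℤ)-1)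
  · rw [if_pos hcond]
    obtain ⟨⟨p₀, hp₀A, hp₀2, hp₀abs⟩, hnoorig, hC3, ⟨q₀, hq₀A, hq₀2, hq₀abs⟩,
      hnoorig1⟩ := hcond
    have hg : ∀ p ∈ A,
        (if p.1 = (i:ℤ) ∨ p.1 = (i:ℤ)-1 then (0:ℤ)
         else if p.2 = (i:ℤ) ∨ p.2 = (i:ℤ)-1 then (if |p.1| < p.2 then (1:ℤ) else 0)
         else 1) = 1 := by
      intro p hp
      rw [if_neg (by push_neg; exact ⟨hnoorig p hp, hnoorig1 p hp⟩)]
      by_cases h2 : p.2 = (i:ℤ) ∨ p.2 = (i:ℤ)-1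
      · rw [if_pos h2, if_pos]
        rcases h2 with h2 | h2
        · have heq : p.1 = p₀.1 := hfun p hp p₀ hp₀A (h2.trans hp₀2.symm)
          rw [h2, heq]
          exact hp₀abs
        · have heq : p.1 = q₀.1 := hfun p hp q₀ hq₀A (h2.trans hq₀2.symm)
          rw [h2, heq]
          exact hq₀abs
      · rw [if_neg h2]
    rw [Finset.prod_eq_one hg, one_mul]
    have hmF : m ∈ V.filter (fun v => ∀ p ∈ A, p.2 ≠ v) :=
      Finset.mem_filter.2 ⟨hm, fun p hp => hnotm p hp⟩
    rw [← Finset.mul_prod_erase _ _ hmF,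
      if_neg (by push_neg; exact ⟨hmi, hmi1⟩), if_pos rfl, one_mul]
    have hxs : ∀ v ∈ (V.filter (fun v => ∀ p ∈ A, p.2 ≠ v)).erase m,
        (if v = (i:ℤ) ∨ v = (i:ℤ)-1 then (0:ℤ) else if v = m then 1 else x) = x := by
      intro v hv
      rw [Finset.mem_erase] at hv
      rw [if_neg, if_neg hv.1]
      rintro (hc | hc)
      · exact (Finset.mem_filter.1 hv.2).2 p₀ hp₀A (hp₀2.trans hc.symm)
      · exact (Finset.mem_filter.1 hv.2).2 q₀ hq₀A (hq₀2.trans hc.symm)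
    rw [Finset.prod_congr rfl hxs, Finset.prod_const, Finset.card_erase_of_mem hmF]
  · rw [if_neg hcond]
    by_cases hex : ∃ p ∈ A, p.2 = (i:ℤ)
    swap
    · push_neg at hex
      have hiF : (i:ℤ) ∈ V.filter (fun v => ∀ p ∈ A, p.2 ≠ v) :=
        Finset.mem_filter.2 ⟨hiV, hex⟩
      rw [Finset.prod_eq_zero hiF (by rw [if_pos (Or.inl rfl)]), mul_zero]
    by_cases hex1 : ∃ p ∈ A, p.2 = (i:ℤ)-1
    swap
    · push_neg at hex1
      have hiF : (i:ℤ)-1 ∈ V.filter (fun v => ∀ p ∈ A, p.2 ≠ v) :=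
        Finset.mem_filter.2 ⟨hi1V, hex1⟩
      rw [Finset.prod_eq_zero hiF (by rw [if_pos (Or.inr rfl)]), mul_zero]
    obtain ⟨p₀, hp₀, hp₀2⟩ := hex
    obtain ⟨q₀, hq₀, hq₀2⟩ := hex1
    have hq₀i : q₀.1 ≠ (i:ℤ) := by
      intro hc
      have h1 := (harc q₀ hq₀).2.1
      have hii : (3:ℤ) ≤ (i:ℤ) := by exact_mod_cast hi
      omega
    have hzero : ∃ p ∈ A,
        (if p.1 = (i:ℤ) ∨ p.1 = (i:ℤ)-1 then (0:ℤ)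
         else if p.2 = (i:ℤ) ∨ p.2 = (i:ℤ)-1 then (if |p.1| < p.2 then (1:ℤ) else 0)
         else 1) = 0 := by
      by_cases c1 : |p₀.1| < (i:ℤ)
      swap
      · refine ⟨p₀, hp₀, ?_⟩
        by_cases hor : p₀.1 = (i:ℤ) ∨ p₀.1 = (i:ℤ)-1
        · rw [if_pos hor]
        · rw [if_neg hor, if_pos (Or.inl hp₀2), if_neg (by rw [hp₀2]; exact c1)]
      by_cases c2 : p₀.1 = (i:ℤ)-1
      · exact ⟨p₀, hp₀, by rw [if_pos (Or.inr c2)]⟩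
      by_cases c3 : ∀ p ∈ A, p.1 ≠ (i:ℤ)
      swap
      · push_neg at c3
        obtain ⟨q, hqA, hq1⟩ := c3
        exact ⟨q, hqA, by rw [if_pos (Or.inl hq1)]⟩
      by_cases c4 : |q₀.1| < (i:ℤ)-1
      swap
      · refine ⟨q₀, hq₀, ?_⟩
        by_cases hor : q₀.1 = (i:ℤ) ∨ q₀.1 = (i:ℤ)-1
        · rw [if_pos hor]
        · rw [if_neg hor, if_pos (Or.inr hq₀2), if_neg (by rw [hq₀2]; exact c4)]
      by_cases c5 : ∀ p ∈ A, p.1 ≠ (i:ℤ)-1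
      · exfalso
        apply hcond
        refine ⟨⟨p₀, hp₀, hp₀2, c1⟩, c3, ?_, ⟨q₀, hq₀, hq₀2, c4⟩, c5⟩
        intro hc
        have h3 := hfun _ hc p₀ hp₀ (by rw [hp₀2])
        exact c2 h3.symm
      · push_neg at c5
        obtain ⟨q, hqA, hq1⟩ := c5
        exact ⟨q, hqA, by rw [if_pos (Or.inr hq1)]⟩
    obtain ⟨p, hp, h0⟩ := hzero
    rw [Finset.prod_eq_zero hp h0, zero_mul]

end Weights


lemma asc_eval (m : ℕ) (x : ℤ) :
    (ascPochhammer ℤ m).eval (x+1) = ∏ k ∈ Finset.Icc 1 m, (x + (k:ℤ)) := by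
  induction m with
  | zero => simp
  | succ m ih =>
    rw [ascPochhammer_succ_right, Polynomial.eval_mul, ih,
      Finset.prod_Icc_succ_top (by omega : 1 ≤ m+1)]
    simp only [Polynomial.eval_add, Polynomial.eval_X, Polynomial.eval_natCast]
    push_cast
    ring


lemma fiber_eval (n i : ℕ) (x : ℤ) (hn2 : 2 ≤ n) (hi : 3 ≤ i) (hin : i ≤ n)
    (V : Finset ℤ) (hV : V ∈ Vsets n i) :
    ∑ A ∈ (PF V (fun v => V.filter (· < v))).filter (fun A =>
        ((∃ p ∈ A, p.2 = (i:ℤ) ∧ |p.1| < (i:ℤ)) ∧ (∀ p ∈ A, p.1 ≠ (i:ℤ)) ∧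
          ((i:ℤ)-1, (i:ℤ)) ∉ A) ∧
        ¬((∃ p ∈ A, p.2 = (i:ℤ)-1 ∧ |p.1| < (i:ℤ)-1) ∧ (∀ p ∈ A, p.1 ≠ (i:ℤ)-1))),
      x ^ ((V.filter (fun v => ∀ p ∈ A, p.2 ≠ v)).card - 1)
    = ((i:ℤ)-2) * ∏ k ∈ Finset.Icc 1 (n-2), (x + (k:ℤ))
      - ((i:ℤ)-2) * (((i:ℤ)-2) * ∏ k ∈ Finset.Icc 1 (n-3), (x + (k:ℤ))) := by
  classical
  obtain ⟨hcard, hiV, hi1V, hne⟩ := Vsets_facts n i V hn2 hi hin hV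
  have hm1 : V.min' hne ≤ 1 := min_facts n i V hn2 hi hin hV hne
  have hii : (3:ℤ) ≤ (i:ℤ) := by exact_mod_cast hi
  have hm : V.min' hne ∈ V := V.min'_mem hne
  have hmin : ∀ v ∈ V, V.min' hne ≤ v := fun v hv => V.min'_le v hv
  have hmi : V.min' hne ≠ (i:ℤ) := by omega
  have hmi1 : V.min' hne ≠ (i:ℤ)-1 := by omega
  rw [Finset.sum_filter]
  have key : ∀ A ∈ PF V (fun v => V.filter (· < v)),
      (if ((∃ p ∈ A, p.2 = (i:ℤ) ∧ |p.1| < (i:ℤ)) ∧ (∀ p ∈ A, p.1 ≠ (i:ℤ)) ∧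
            ((i:ℤ)-1, (i:ℤ)) ∉ A) ∧
          ¬((∃ p ∈ A, p.2 = (i:ℤ)-1 ∧ |p.1| < (i:ℤ)-1) ∧ (∀ p ∈ A, p.1 ≠ (i:ℤ)-1))
        then x ^ ((V.filter (fun v => ∀ p ∈ A, p.2 ≠ v)).card - 1) else 0)
      = ((∏ p ∈ A, (if p.2 = (i:ℤ) then (if |p.1| < (i:ℤ) ∧ p.1 ≠ (i:ℤ)-1 then (1:ℤ) else 0)
            else if p.1 = (i:ℤ) then 0 else 1)) *
          ∏ v ∈ V.filter (fun v => ∀ p ∈ A, p.2 ≠ v),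
            (if v = V.min' hne then (1:ℤ) else if v = (i:ℤ) then 0 else x))
        - ((∏ p ∈ A, (if p.1 = (i:ℤ) ∨ p.1 = (i:ℤ)-1 then (0:ℤ)
            else if p.2 = (i:ℤ) ∨ p.2 = (i:ℤ)-1 then (if |p.1| < p.2 then (1:ℤ) else 0)
            else 1)) *
          ∏ v ∈ V.filter (fun v => ∀ p ∈ A, p.2 ≠ v),
            (if v = (i:ℤ) ∨ v = (i:ℤ)-1 then (0:ℤ) else if v = V.min' hne then 1 else x)) := by
    intro A hA
    rw [W1_eq i x hi V (V.min' hne) hm hmin hmi hiV A hA,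
      W2_eq i x hi V (V.min' hne) hm hmin hmi hmi1 hiV hi1V A hA]
    by_cases h1 : (∃ p ∈ A, p.2 = (i:ℤ) ∧ |p.1| < (i:ℤ)) ∧ (∀ p ∈ A, p.1 ≠ (i:ℤ)) ∧
        ((i:ℤ)-1, (i:ℤ)) ∉ A
    · by_cases h2 : (∃ p ∈ A, p.2 = (i:ℤ)-1 ∧ |p.1| < (i:ℤ)-1) ∧
          (∀ p ∈ A, p.1 ≠ (i:ℤ)-1)
      · rw [if_neg (fun hc => hc.2 h2), if_pos h1,
          if_pos ⟨h1.1, h1.2.1, h1.2.2, h2.1, h2.2⟩]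
        ring
      · rw [if_pos ⟨h1, h2⟩, if_pos h1, if_neg (fun hc => h2 ⟨hc.2.2.2.1, hc.2.2.2.2⟩)]
        ring
    · rw [if_neg (fun hc => h1 hc.1), if_neg h1,
        if_neg (fun hc => h1 ⟨hc.1, hc.2.1, hc.2.2.1⟩)]
      ring
  rw [Finset.sum_congr rfl key, Finset.sum_sub_distrib]
  have hs1 := PF_sum (fun v => V.filter (· < v))
    (fun p => if p.2 = (i:ℤ) then (if |p.1| < (i:ℤ) ∧ p.1 ≠ (i:ℤ)-1 then (1:ℤ) else 0)
      else if p.1 = (i:ℤ) then 0 else 1)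
    (fun v => if v = V.min' hne then (1:ℤ) else if v = (i:ℤ) then 0 else x) V
  have hs2 := PF_sum (fun v => V.filter (· < v))
    (fun p => if p.1 = (i:ℤ) ∨ p.1 = (i:ℤ)-1 then (0:ℤ)
      else if p.2 = (i:ℤ) ∨ p.2 = (i:ℤ)-1 then (if |p.1| < p.2 then (1:ℤ) else 0)
      else 1)
    (fun v => if v = (i:ℤ) ∨ v = (i:ℤ)-1 then (0:ℤ) else if v = V.min' hne then 1 else x) V
  simp only at hs1 hs2
  rw [hs1, hs2, R1_eval n i x V hn2 hi hin hV hne, R2_eval n i x V hn2 hi hin hV hne]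


/-- for `2 ≤ i ≤ n`, summing over type B linked partitions
in which `i` is a legal destination, `i-1` is a vertex which is not a legal
destination, and neither `(i-1, i)` nor `(-i, i-1)` is an arc,
`∑ x^{os τ - 1} = (i-2) 2^{n-2}(x+1)_{n-2} - (i-2)² 2^{n-2}(x+1)_{n-3}`. -/
theorem lpb_Y_enumeration (n i : ℕ) (hn : 2 ≤ n) (hi : 2 ≤ i) (hin : i ≤ n)
    (x : ℤ) :
    ∑ T ∈ (LPB n).filter (fun T => IsLegalDestB T.2 (i : ℤ) ∧
        ((i : ℤ) - 1) ∈ T.1 ∧ ¬ IsLegalDestB T.2 ((i : ℤ) - 1) ∧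
        ((i : ℤ) - 1, (i : ℤ)) ∉ T.2 ∧ (-(i : ℤ), (i : ℤ) - 1) ∉ T.2),
      x ^ (osB T.1 T.2 - 1) =
    ((i : ℤ) - 2) * 2 ^ (n - 2) * (ascPochhammer ℤ (n - 2)).eval (x + 1) -
      ((i : ℤ) - 2) ^ 2 * 2 ^ (n - 2) *
        (ascPochhammer ℤ (n - 3)).eval (x + 1) := by
  classical
  by_cases hi2 : i = 2
  · subst hi2
    have hempty : (LPB n).filter (fun T => IsLegalDestB T.2 ((2:ℕ) : ℤ) ∧
        (((2:ℕ) : ℤ) - 1) ∈ T.1 ∧ ¬ IsLegalDestB T.2 (((2:ℕ) : ℤ) - 1) ∧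
        (((2:ℕ) : ℤ) - 1, ((2:ℕ) : ℤ)) ∉ T.2 ∧ (-((2:ℕ) : ℤ), ((2:ℕ) : ℤ) - 1) ∉ T.2)
        = ∅ := by
      apply Finset.eq_empty_of_forall_notMem
      rintro ⟨W, A⟩ hT
      rw [Finset.mem_filter] at hT
      obtain ⟨hmem, hlegal, h1W, hnl, hC3, hC4⟩ := hT
      rw [LPB, Finset.mem_filter] at hmem
      obtain ⟨-, habs, hone, harc, hfun⟩ := hmem
      obtain ⟨⟨p, hpA, hp2, hpabs⟩, -⟩ := hlegal
      have h1 := harc p hpA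
      have h2 := habs p.1 h1.1
      have hpabs' : |p.1| < 2 := by
        have : |((2:ℕ):ℤ)| = 2 := by norm_num
        rw [this] at hpabs
        exact hpabs
      have h1W' : (1:ℤ) ∈ W := by
        have : ((2:ℕ):ℤ) - 1 = 1 := by norm_num
        rwa [this] at h1W
      have hp1 : p.1 = 1 := by
        rcases abs_cases p.1 with ⟨he, _⟩ | ⟨he, _⟩
        · omega
        · exfalso
          have hp1n : p.1 = -1 := by omega
          rcases hone 1 (Finset.mem_Icc.2 ⟨le_refl _, by exact_mod_cast (by omega : 1 ≤ n)⟩) with h | h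
          · exact h.2 (by rw [← hp1n]; exact h1.1)
          · exact h.2 h1W'
      apply hC3
      have : p = (((2:ℕ):ℤ) - 1, ((2:ℕ):ℤ)) := Prod.ext (by rw [hp1]; norm_num) hp2
      rw [← this]
      exact hpA
    rw [hempty, Finset.sum_empty]
    norm_num
  · have hi3 : 3 ≤ i := by omega
    have hii : (3:ℤ) ≤ (i:ℤ) := by exact_mod_cast hi3
    have habsi : |(i:ℤ)| = (i:ℤ) := abs_of_nonneg (by omega)
    have habsi1 : |(i:ℤ) - 1| = (i:ℤ) - 1 := abs_of_nonneg (by omega)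
    have hiI : (i:ℤ) ∈ Finset.Icc (1:ℤ) (n:ℤ) :=
      Finset.mem_Icc.2 ⟨by omega, by exact_mod_cast hin⟩
    have hmaps : ∀ T ∈ (LPB n).filter (fun T => IsLegalDestB T.2 (i : ℤ) ∧
        ((i : ℤ) - 1) ∈ T.1 ∧ ¬ IsLegalDestB T.2 ((i : ℤ) - 1) ∧
        ((i : ℤ) - 1, (i : ℤ)) ∉ T.2 ∧ (-(i : ℤ), (i : ℤ) - 1) ∉ T.2),
        T.1 ∈ Vsets n i := by
      rintro ⟨W, A⟩ hT
      rw [Finset.mem_filter] at hT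
      obtain ⟨hmem, hlegal, h1W, hnl, hC3, hC4⟩ := hT
      rw [LPB, Finset.mem_filter, Finset.mem_product, Finset.mem_powerset,
        Finset.mem_powerset] at hmem
      obtain ⟨⟨hWsub, -⟩, habs, hone, harc, hfun⟩ := hmem
      obtain ⟨⟨p, hpA, hp2, -⟩, -⟩ := hlegal
      have hiW : (i:ℤ) ∈ W := by
        have := (harc p hpA).2.1
        rwa [hp2] at this
      rw [Vsets, Finset.mem_filter, Finset.mem_powerset]
      exact ⟨hWsub, habs, hone, hiW, h1W⟩
    rw [← Finset.sum_fiberwise_of_maps_to hmaps (fun T => x ^ (osB T.1 T.2 - 1))]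
    have hfib : ∀ V ∈ Vsets n i,
        ∑ T ∈ ((LPB n).filter (fun T => IsLegalDestB T.2 (i : ℤ) ∧
            ((i : ℤ) - 1) ∈ T.1 ∧ ¬ IsLegalDestB T.2 ((i : ℤ) - 1) ∧
            ((i : ℤ) - 1, (i : ℤ)) ∉ T.2 ∧ (-(i : ℤ), (i : ℤ) - 1) ∉ T.2)).filter
              (fun T => T.1 = V),
          x ^ (osB T.1 T.2 - 1)
        = ((i:ℤ)-2) * ∏ k ∈ Finset.Icc 1 (n-2), (x + (k:ℤ))
          - ((i:ℤ)-2) * (((i:ℤ)-2) * ∏ k ∈ Finset.Icc 1 (n-3), (x + (k:ℤ))) := by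
      intro V hV
      have hVdata := hV
      rw [Vsets, Finset.mem_filter, Finset.mem_powerset] at hVdata
      obtain ⟨hVsub, habsV, honeV, hiV, hi1V⟩ := hVdata
      have hstep : ∑ T ∈ ((LPB n).filter (fun T => IsLegalDestB T.2 (i : ℤ) ∧
            ((i : ℤ) - 1) ∈ T.1 ∧ ¬ IsLegalDestB T.2 ((i : ℤ) - 1) ∧
            ((i : ℤ) - 1, (i : ℤ)) ∉ T.2 ∧ (-(i : ℤ), (i : ℤ) - 1) ∉ T.2)).filter
              (fun T => T.1 = V),
          x ^ (osB T.1 T.2 - 1)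
          = ∑ A ∈ (PF V (fun v => V.filter (· < v))).filter (fun A =>
              ((∃ p ∈ A, p.2 = (i:ℤ) ∧ |p.1| < (i:ℤ)) ∧ (∀ p ∈ A, p.1 ≠ (i:ℤ)) ∧
                ((i:ℤ)-1, (i:ℤ)) ∉ A) ∧
              ¬((∃ p ∈ A, p.2 = (i:ℤ)-1 ∧ |p.1| < (i:ℤ)-1) ∧
                (∀ p ∈ A, p.1 ≠ (i:ℤ)-1))),
            x ^ ((V.filter (fun v => ∀ p ∈ A, p.2 ≠ v)).card - 1) := by
        refine Finset.sum_nbij' (i := fun T => T.2) (j := fun A => (V, A)) ?_ ?_ ?_ ?_ ?_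
        · rintro ⟨W, A⟩ hT
          rw [Finset.mem_filter] at hT
          obtain ⟨hT, hT1⟩ := hT
          simp only at hT1
          subst hT1
          rw [Finset.mem_filter] at hT
          obtain ⟨hmem, hlegal, h1W, hnl, hC3, hC4⟩ := hT
          rw [LPB, Finset.mem_filter] at hmem
          obtain ⟨-, habs, hone, harc, hfun⟩ := hmem
          rw [Finset.mem_filter]
          constructor
          · rw [mem_PF]
            refine ⟨fun p hp => ?_, hfun⟩
            obtain ⟨h1, h2, h3⟩ := harc p hp
            exact ⟨h2, Finset.mem_filter.2 ⟨h1, h3⟩⟩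
          · unfold IsLegalDestB at hlegal hnl
            rw [habsi] at hlegal
            rw [habsi1] at hnl
            exact ⟨⟨hlegal.1, hlegal.2, hC3⟩, hnl⟩
        · intro A hA
          rw [Finset.mem_filter] at hA
          obtain ⟨hPF, hcond⟩ := hA
          rw [mem_PF] at hPF
          obtain ⟨hmemA, hfunA⟩ := hPF
          have harcA : ∀ p ∈ A, p.1 ∈ V ∧ p.2 ∈ V ∧ p.1 < p.2 := by
            intro p hp
            obtain ⟨h1, h2⟩ := hmemA p hp
            rw [Finset.mem_filter] at h2
            exact ⟨h2.1, h1, h2.2⟩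
          rw [Finset.mem_filter]
          refine ⟨Finset.mem_filter.2 ⟨?_, ?_, ?_, ?_, ?_, ?_⟩, rfl⟩
          · rw [LPB, Finset.mem_filter, Finset.mem_product, Finset.mem_powerset,
              Finset.mem_powerset]
            refine ⟨⟨hVsub, ?_⟩, habsV, honeV, harcA, hfunA⟩
            intro p hp
            rw [Finset.mem_product]
            exact ⟨hVsub (harcA p hp).1, hVsub (harcA p hp).2.1⟩
          · unfold IsLegalDestB
            rw [habsi]
            exact ⟨hcond.1.1, hcond.1.2.1⟩
          · exact hi1V
          · unfold IsLegalDestB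
            rw [habsi1]
            exact hcond.2
          · exact hcond.1.2.2
          · intro hc
            have := (harcA _ hc).1
            simp only at this
            rcases honeV (i:ℤ) hiI with h | h
            · exact h.2 this
            · exact h.2 hiV
        · rintro ⟨W, A⟩ hT
          rw [Finset.mem_filter] at hT
          have hT1 := hT.2
          simp only at hT1
          simp only
          rw [hT1]
        · intro A hA
          rfl
        · rintro ⟨W, A⟩ hT
          rw [Finset.mem_filter] at hT
          have hT1 := hT.2
          simp only at hT1
          subst hT1
          rfl
      rw [hstep]
      exact fiber_eval n i x hn hi3 hin V hV
    rw [Finset.sum_congr rfl hfib, Finset.sum_const, Vsets_card n i hi3 hin,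
      asc_eval, asc_eval, nsmul_eq_mul]
    push_cast
    ring
end
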